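/- arXiv:1908.01124 — 9 statements merged into one kernel-verified Lean document; each statement's English description precedes it below -/
import Mathlib

section
/- Let p ∈ ℕ, p ≥ 1, and let ζ = (ξ, η) ∈ ℝ² with ξ ≠ 0. Then the multiexponential map Γ^{(p+1)} : (ℝ²)^{p+1} → ℝ^{p+2} of the filiform group of step p+1 is a submersion at (ζ, ζ, …, ζ): its Fréchet derivative at the point (ζ, ζ, …, ζ) ∈ (ℝ²)^{p+1} is a surjective linear map from (ℝ²)^{p+1} onto ℝ^{p+2}. -/
open Finset Matrix

namespace Filiform

lemma key_integral (a b : ℝ) (hb : b ≠ 0) (k : ℕ) :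
    ∫ s in (0:ℝ)..1, (a + s * b) ^ k = ((a + b) ^ (k+1) - a ^ (k+1)) / (((k:ℝ)+1) * b) := by
  have hcont : Continuous fun s : ℝ => (a + s * b) ^ k := by continuity
  have hd : ∀ s ∈ Set.uIcc (0:ℝ) 1,
      HasDerivAt (fun s : ℝ => (a + s * b) ^ (k+1) / (((k:ℝ)+1) * b)) ((a + s * b) ^ k) s := by
    intro s _
    have h1 : HasDerivAt (fun s : ℝ => a + s * b) b s := by
      simpa using ((hasDerivAt_id s).mul_const b).const_add a
    have h2 := (h1.pow (k+1)).div_const (((k:ℝ)+1) * b)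
    refine h2.congr_deriv ?_
    have : ((k:ℝ)+1) ≠ 0 := by positivity
    rw [Nat.add_sub_cancel]; push_cast
    field_simp
  rw [intervalIntegral.integral_eq_sub_of_hasDerivAt hd (hcont.intervalIntegrable _ _)]
  rw [div_sub_div_same]
  norm_num

/-- Closed form of the `τ_k` component. -/
noncomputable def tau (q : ℕ) (k : ℕ) (w : Fin q → ℝ × ℝ) : ℝ :=
  ∑ j, (w j).2 *
    ((((∑ i' ∈ Finset.univ.filter (fun i' => i' < j), (w i').1) + (w j).1) ^ (k+1)
      - (∑ i' ∈ Finset.univ.filter (fun i' => i' < j), (w i').1) ^ (k+1))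
      / (((k:ℝ)+1) * (w j).1) / (Nat.factorial k : ℝ))

/-- Closed form of `filiformGamma`, valid when all `u j ≠ 0`. -/
noncomputable def G (p q : ℕ) (w : Fin q → ℝ × ℝ) : Fin (p + 2) → ℝ :=
  fun i =>
    if (i : ℕ) = 0 then ∑ j, (w j).1
    else if (i : ℕ) = 1 then ∑ j, (w j).2
    else tau q ((i : ℕ) - 1) w

variable {q : ℕ}

lemma diff_u (j : Fin q) : Differentiable ℝ (fun w : Fin q → ℝ × ℝ => (w j).1) :=
  (differentiable_apply j).fst

lemma diff_v (j : Fin q) : Differentiable ℝ (fun w : Fin q → ℝ × ℝ => (w j).2) :=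
  (differentiable_apply j).snd

lemma diff_S (j : Fin q) :
    Differentiable ℝ (fun w : Fin q → ℝ × ℝ =>
      ∑ i' ∈ Finset.univ.filter (fun i' => i' < j), (w i').1) :=
  Differentiable.fun_sum fun i _ => diff_u i

lemma tau_diffAt (k : ℕ) (x : Fin q → ℝ × ℝ) (hx : ∀ j, (x j).1 ≠ 0) :
    DifferentiableAt ℝ (tau q k) x := by
  unfold tau
  refine DifferentiableAt.fun_sum fun j _ => ?_
  refine ((diff_v j).differentiableAt).mul ?_
  have hS : DifferentiableAt ℝ (fun w : Fin q → ℝ × ℝ =>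
      ∑ i' ∈ Finset.univ.filter (fun i' => i' < j), (w i').1) x := (diff_S j).differentiableAt
  have hu : DifferentiableAt ℝ (fun w : Fin q → ℝ × ℝ => (w j).1) x := (diff_u j).differentiableAt
  have hnum : DifferentiableAt ℝ (fun w : Fin q → ℝ × ℝ =>
      (((∑ i' ∈ Finset.univ.filter (fun i' => i' < j), (w i').1) + (w j).1) ^ (k+1)
        - (∑ i' ∈ Finset.univ.filter (fun i' => i' < j), (w i').1) ^ (k+1))) x :=
    DifferentiableAt.sub ((hS.add hu).pow _) (hS.pow _)
  have hden : DifferentiableAt ℝ (fun w : Fin q → ℝ × ℝ => ((k:ℝ)+1) * (w j).1) x :=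
    (differentiableAt_const _).mul hu
  have hden0 : ((k:ℝ)+1) * (x j).1 ≠ 0 :=
    mul_ne_zero (by positivity) (hx j)
  simp only [div_eq_mul_inv]
  exact (hnum.mul (hden.inv hden0)).mul_const _

lemma sum_lt_card (ξ : ℝ) (j : Fin q) :
    ∑ _i' ∈ Finset.univ.filter (fun i' => i' < j), ξ = (j:ℝ) * ξ := by
  rw [Finset.sum_const]
  have : Finset.univ.filter (fun i' => i' < j) = Finset.Iio j := by
    ext x; simp
  rw [this, Fin.card_Iio, nsmul_eq_mul]

noncomputable def Mval (ξ : ℝ) (k : ℕ) (j : Fin q) : ℝ :=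
  ξ ^ k * (((j:ℝ) + 1) ^ (k+1) - (j:ℝ) ^ (k+1)) / (Nat.factorial (k+1) : ℝ)

lemma coeff_eval {ξ : ℝ} (hξ : ξ ≠ 0) (k : ℕ) (j : Fin q) :
    (((j:ℝ) * ξ + ξ) ^ (k+1) - ((j:ℝ) * ξ) ^ (k+1)) / (((k:ℝ)+1) * ξ)
      / (Nat.factorial k : ℝ) = Mval ξ k j := by
  unfold Mval
  have h1 : ((j:ℝ) * ξ + ξ) = ((j:ℝ) + 1) * ξ := by ring
  have hk : (Nat.factorial k : ℝ) ≠ 0 := Nat.cast_ne_zero.2 (Nat.factorial_ne_zero k)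
  have hk1 : ((k:ℝ) + 1) ≠ 0 := by positivity
  have hfac : (Nat.factorial (k+1) : ℝ) = ((k:ℝ)+1) * (Nat.factorial k : ℝ) := by
    rw [Nat.factorial_succ]; push_cast; ring
  rw [h1, mul_pow, mul_pow, hfac]
  field_simp
  ring

lemma tau_eval {ξ : ℝ} (hξ : ξ ≠ 0) (k : ℕ) (b : Fin q → ℝ) :
    tau q k (fun j => (ξ, b j)) = ∑ j, b j * Mval ξ k j := by
  unfold tau
  refine Finset.sum_congr rfl fun j _ => ?_
  simp only [sum_lt_card]
  rw [coeff_eval hξ]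

noncomputable def Mmat (ξ : ℝ) (q : ℕ) : Matrix (Fin q) (Fin q) ℝ :=
  Matrix.of fun k j => Mval ξ (k:ℕ) j

noncomputable def Amat (ξ : ℝ) (q : ℕ) : Matrix (Fin q) (Fin q) ℝ :=
  Matrix.of fun k m => if (m:ℕ) ≤ (k:ℕ) then
    ξ ^ (k:ℕ) * (((k:ℕ)+1).choose (m:ℕ) : ℝ) / (Nat.factorial ((k:ℕ)+1) : ℝ) else 0

lemma binom_sum (x : ℝ) (k : ℕ) :
    ∑ m ∈ Finset.range (k+1), x ^ m * ((k+1).choose m : ℝ) = (x + 1) ^ (k+1) - x ^ (k+1) := by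
  have h := add_pow x 1 (k+1)
  simp only [one_pow, mul_one] at h
  rw [Finset.sum_range_succ] at h
  simp only [Nat.choose_self, Nat.cast_one, mul_one] at h
  linarith [h]

lemma Mmat_eq (ξ : ℝ) (q : ℕ) :
    Mmat ξ q = Amat ξ q * (Matrix.vandermonde (fun j : Fin q => (j:ℝ)))ᵀ := by
  ext k j
  simp only [Matrix.mul_apply, Mmat, Amat, Matrix.of_apply, Matrix.transpose_apply,
    Matrix.vandermonde_apply, ite_mul, zero_mul]
  have hkq : (k:ℕ) + 1 ≤ q := k.2
  rw [Fin.sum_univ_eq_sum_range (fun m => if m ≤ (k:ℕ) then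
    ξ ^ (k:ℕ) * (((k:ℕ)+1).choose m : ℝ) / (Nat.factorial ((k:ℕ)+1) : ℝ) * (j:ℝ) ^ m else 0) q]
  rw [← Finset.sum_filter]
  have hfil : (Finset.range q).filter (fun m => m ≤ (k:ℕ)) = Finset.range ((k:ℕ)+1) := by
    ext m
    simp only [Finset.mem_filter, Finset.mem_range, Nat.lt_succ_iff]
    omega
  rw [hfil]
  unfold Mval
  have hfac : (Nat.factorial ((k:ℕ)+1) : ℝ) ≠ 0 := Nat.cast_ne_zero.2 (Nat.factorial_ne_zero _)
  rw [← binom_sum ((j:ℝ)) (k:ℕ), Finset.mul_sum, Finset.sum_div]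
  refine Finset.sum_congr rfl fun m hm => ?_
  field_simp

lemma Mmat_det_ne_zero {ξ : ℝ} (hξ : ξ ≠ 0) (q : ℕ) : (Mmat ξ q).det ≠ 0 := by
  rw [Mmat_eq, Matrix.det_mul, Matrix.det_transpose]
  refine mul_ne_zero ?_ ?_
  · have htri : (Amat ξ q).BlockTriangular OrderDual.toDual := by
      intro i j h
      have hij : i < j := h
      rw [Amat, Matrix.of_apply, if_neg (by exact_mod_cast not_le.mpr hij)]
    rw [Matrix.det_of_lowerTriangular (Amat ξ q) htri]
    refine Finset.prod_ne_zero_iff.2 fun k _ => ?_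
    simp only [Amat, Matrix.of_apply, le_refl, if_pos]
    have h1 : (((k:ℕ)+1).choose (k:ℕ) : ℝ) = ((k:ℕ):ℝ) + 1 := by
      rw [Nat.choose_succ_self_right]; push_cast; ring
    rw [h1]
    have : (Nat.factorial ((k:ℕ)+1) : ℝ) ≠ 0 := Nat.cast_ne_zero.2 (Nat.factorial_ne_zero _)
    positivity
  · rw [Matrix.det_vandermonde_ne_zero_iff]
    intro a b hab
    exact Fin.val_injective (Nat.cast_injective hab)

end Filiform

/-- The multiexponential map `Γ^{(q)} : (ℝ²)^q → ℝ^{p+2}` of the filiform group of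
step `p+1`.  For `w j = (u j, v j)`, the first two coordinates are `∑ u j` and `∑ v j`,
and for `k = 1, …, p` the coordinate `τ_k` (stored at index `k+1`) is
`∑ j, v j * ∫₀¹ ((u 0 + ⋯ + u (j-1)) + s * u j)^k / k! ds`. -/
noncomputable def filiformGamma (p q : ℕ) (w : Fin q → ℝ × ℝ) : Fin (p + 2) → ℝ :=
  fun i =>
    if (i : ℕ) = 0 then ∑ j, (w j).1
    else if (i : ℕ) = 1 then ∑ j, (w j).2
    else ∑ j, (w j).2 *
      ∫ s in (0:ℝ)..1,
        ((∑ i' ∈ Finset.univ.filter (fun i' => i' < j), (w i').1) + s * (w j).1)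
            ^ ((i : ℕ) - 1) / (Nat.factorial ((i : ℕ) - 1) : ℝ)


namespace Filiform

lemma gamma_eq_G (p q : ℕ) (w : Fin q → ℝ × ℝ) (hw : ∀ j, (w j).1 ≠ 0) :
    filiformGamma p q w = G p q w := by
  funext i
  unfold filiformGamma G tau
  split_ifs with h1 h2
  · rfl
  · rfl
  · refine Finset.sum_congr rfl fun j _ => ?_
    congr 1
    rw [intervalIntegral.integral_div, key_integral _ _ (hw j)]

end Filiform

/-- If `p ≥ 1` and `ζ = (ξ, η)` with `ξ ≠ 0`, then the multiexponential
map `Γ^{(p+1)}` of the filiform group of step `p+1` is a submersion at `(ζ, …, ζ)`: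
its Fréchet derivative there is surjective onto `ℝ^{p+2}`. -/
theorem filiform_multiexponential_submersion (p : ℕ) (hp : 1 ≤ p) (ξ η : ℝ) (hξ : ξ ≠ 0) :
    Function.Surjective
      ⇑(fderiv ℝ (filiformGamma p (p + 1)) (fun _ : Fin (p + 1) => ((ξ, η) : ℝ × ℝ))) := by
  classical
  set x₀ : Fin (p+1) → ℝ × ℝ := fun _ => ((ξ, η) : ℝ × ℝ) with hx₀
  have hx0u : ∀ j : Fin (p+1), (x₀ j).1 ≠ 0 := fun j => hξ
  have hev : ∀ᶠ w in nhds x₀, ∀ j, (w j).1 ≠ 0 := by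
    rw [Filter.eventually_all]
    intro j
    exact ((continuous_apply j).fst.continuousAt).eventually_ne (hx0u j)
  have heq : filiformGamma p (p+1) =ᶠ[nhds x₀] Filiform.G p (p+1) :=
    hev.mono fun w hw => Filiform.gamma_eq_G p (p+1) w hw
  have hGdiff : DifferentiableAt ℝ (Filiform.G p (p+1)) x₀ := by
    rw [differentiableAt_pi]
    intro i
    unfold Filiform.G
    split_ifs with h1 h2
    · exact DifferentiableAt.fun_sum fun j _ => (Filiform.diff_u j).differentiableAt
    · exact DifferentiableAt.fun_sum fun j _ => (Filiform.diff_v j).differentiableAt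
    · exact Filiform.tau_diffAt _ _ hx0u
  set L := fderiv ℝ (filiformGamma p (p+1)) x₀ with hLdef
  have hLG : L = fderiv ℝ (Filiform.G p (p+1)) x₀ := heq.fderiv_eq
  have hGf : HasFDerivAt (Filiform.G p (p+1)) L x₀ := by
    rw [hLG]; exact hGdiff.hasFDerivAt
  have dir : ∀ d : Fin (p+1) → ℝ × ℝ,
      HasDerivAt (fun t : ℝ => Filiform.G p (p+1) (x₀ + t • d)) (L d) 0 := by
    intro d
    have hc : HasDerivAt (fun t : ℝ => x₀ + t • d) d 0 := by
      simpa using ((hasDerivAt_id (0:ℝ)).smul_const d).const_add x₀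
    exact hGf.comp_hasDerivAt_of_eq 0 hc (by simp)
  -- v-direction curves
  have hcurve : ∀ (j : Fin (p+1)) (t : ℝ),
      x₀ + t • (Pi.single j ((0:ℝ),(1:ℝ)) : Fin (p+1) → ℝ × ℝ) = fun j' => (ξ, η + if j' = j then t else 0) := by
    intro j t
    funext j'
    by_cases h : j' = j <;> simp [x₀, Pi.single_apply, h, Prod.ext_iff]
  have hsplit : ∀ (j : Fin (p+1)) (t : ℝ) (c : Fin (p+1) → ℝ),
      ∑ j', (η + if j' = j then t else 0) * c j'
        = (∑ j', η * c j') + t * c j := by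
    intro j t c
    simp only [add_mul, ite_mul, zero_mul]
    rw [Finset.sum_add_distrib, Finset.sum_ite_eq' Finset.univ j (fun j' => t * c j')]
    simp
  have hcol : ∀ j : Fin (p+1), L ((Pi.single j ((0:ℝ),(1:ℝ)) : Fin (p+1) → ℝ × ℝ))
      = Fin.cons 0 (fun k : Fin (p+1) => Filiform.Mval ξ (k:ℕ) j) := by
    intro j
    refine HasDerivAt.unique (dir _) ?_
    rw [hasDerivAt_pi]
    intro i
    simp only [hcurve j]
    induction i using Fin.cases with
    | zero =>
        have hfun : (fun t : ℝ => Filiform.G p (p+1)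
            (fun j' => (ξ, η + if j' = j then t else 0)) 0)
            = fun _ => ∑ _j' : Fin (p+1), ξ := by
          funext t
          unfold Filiform.G
          norm_num
        rw [hfun, Fin.cons_zero]
        exact hasDerivAt_const 0 _
    | succ k =>
        rw [Fin.cons_succ]
        by_cases hk : (k:ℕ) = 0
        · have hfun : (fun t : ℝ => Filiform.G p (p+1)
              (fun j' => (ξ, η + if j' = j then t else 0)) k.succ)
              = fun t => (∑ _j' : Fin (p+1), η) + t := by
            funext t
            unfold Filiform.G
            rw [if_neg (by simp [Fin.val_succ]), if_pos (by simp [Fin.val_succ, hk])]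
            simpa using hsplit j t (fun _ => 1)
          rw [hfun]
          have hM1 : Filiform.Mval ξ (k:ℕ) j = 1 := by
            rw [hk]; unfold Filiform.Mval; norm_num
          rw [hM1]
          simpa using (hasDerivAt_id (0:ℝ)).const_add (∑ _j' : Fin (p+1), η)
        · have hfun : (fun t : ℝ => Filiform.G p (p+1)
              (fun j' => (ξ, η + if j' = j then t else 0)) k.succ)
              = fun t => (∑ j' : Fin (p+1), η * Filiform.Mval ξ (k:ℕ) j') + t * Filiform.Mval ξ (k:ℕ) j := by
            funext t
            unfold Filiform.G
            rw [if_neg (by simp [Fin.val_succ]), if_neg (by simp [Fin.val_succ, hk])]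
            have hcoe : ((k.succ : Fin (p+2)) : ℕ) - 1 = (k:ℕ) := by simp [Fin.val_succ]
            rw [hcoe, Filiform.tau_eval hξ]
            exact hsplit j t _
          rw [hfun]
          have := ((hasDerivAt_id (0:ℝ)).mul_const (Filiform.Mval ξ (k:ℕ) j)).const_add
            (∑ j' : Fin (p+1), η * Filiform.Mval ξ (k:ℕ) j')
          simpa using this
  -- u-direction
  have hg0 : L ((Pi.single (0 : Fin (p+1)) ((1:ℝ),(0:ℝ)) : Fin (p+1) → ℝ × ℝ)) 0 = 1 := by
    have h1 := (hasDerivAt_pi.mp (dir ((Pi.single (0 : Fin (p+1)) ((1:ℝ),(0:ℝ)) : Fin (p+1) → ℝ × ℝ)))) 0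
    have hcurveu : ∀ t : ℝ, x₀ + t • (Pi.single (0 : Fin (p+1)) ((1:ℝ),(0:ℝ)) : Fin (p+1) → ℝ × ℝ)
        = fun j' => (ξ + if j' = 0 then t else 0, η) := by
      intro t
      funext j'
      by_cases h : j' = (0 : Fin (p+1)) <;> simp [x₀, Pi.single_apply, h, Prod.ext_iff]
    have hfun : (fun t : ℝ => Filiform.G p (p+1)
        (x₀ + t • (Pi.single (0 : Fin (p+1)) ((1:ℝ),(0:ℝ)) : Fin (p+1) → ℝ × ℝ)) 0)
        = fun t => (∑ _j' : Fin (p+1), ξ) + t := by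
      funext t
      rw [hcurveu]
      unfold Filiform.G
      norm_num
      rw [Finset.sum_add_distrib, Finset.sum_ite_eq' Finset.univ (0 : Fin (p+1)) (fun _ => t)]
      simp
    rw [hfun] at h1
    have h2 : HasDerivAt (fun t : ℝ => (∑ _j' : Fin (p+1), ξ) + t) 1 0 := by
      simpa using (hasDerivAt_id (0:ℝ)).const_add (∑ _j' : Fin (p+1), ξ)
    exact h1.unique h2
  -- endgame
  intro y
  set g : Fin (p+2) → ℝ := L ((Pi.single (0 : Fin (p+1)) ((1:ℝ),(0:ℝ)) : Fin (p+1) → ℝ × ℝ)) with hgdef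
  set Mm := Filiform.Mmat ξ (p+1) with hMdef
  have hdet : IsUnit Mm.det := isUnit_iff_ne_zero.2 (Filiform.Mmat_det_ne_zero hξ (p+1))
  set z : Fin (p+1) → ℝ := fun k => y k.succ - y 0 * g k.succ with hzdef
  set bb : Fin (p+1) → ℝ := Mm⁻¹.mulVec z with hbdef
  refine ⟨y 0 • (Pi.single (0 : Fin (p+1)) ((1:ℝ),(0:ℝ)) : Fin (p+1) → ℝ × ℝ)
    + ∑ j, bb j • (Pi.single j ((0:ℝ),(1:ℝ)) : Fin (p+1) → ℝ × ℝ), ?_⟩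
  simp only [map_add, map_sum, _root_.map_smul]
  funext i
  have hMv : Mm.mulVec bb = z := by
    rw [hbdef, Matrix.mulVec_mulVec, Matrix.mul_nonsing_inv _ hdet, Matrix.one_mulVec]
  induction i using Fin.cases with
  | zero =>
      simp only [Pi.add_apply, Pi.smul_apply, Finset.sum_apply, hcol, Fin.cons_zero,
        smul_eq_mul, mul_zero, Finset.sum_const_zero, add_zero]
      simp only [← hgdef]
      rw [hg0]
      ring
  | succ k =>
      simp only [Pi.add_apply, Pi.smul_apply, Finset.sum_apply, hcol, Fin.cons_succ,
        smul_eq_mul]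
      have h3 : ∑ j, bb j * Filiform.Mval ξ (k:ℕ) j = z k := by
        have : Mm.mulVec bb k = z k := by rw [hMv]
        rw [← this]
        simp only [Matrix.mulVec, dotProduct, Mm, Filiform.Mmat, Matrix.of_apply]
        exact Finset.sum_congr rfl fun j _ => mul_comm _ _
      rw [h3, hzdef]
      simp only [← hgdef]
      ring
end

section
/- For every p ∈ ℕ, the (p+1)×(p+1) real matrix M with entries M_{i,j} = j^i − (j−1)^i, for i, j ∈ {1, …, p+1}, is invertible (its determinant is nonzero). -/
/-- For every `p ∈ ℕ`, the `(p+1) × (p+1)` real matrix with entries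
`M_{i,j} = j^i − (j−1)^i` for `i, j ∈ {1, …, p+1}` (here indexed by `i, j : Fin (p+1)`,
so that the entry is `(j+1)^(i+1) − j^(i+1)`) has nonzero determinant, hence is
invertible. -/
theorem consecutive_power_difference_matrix_det_ne_zero (p : ℕ) :
    (Matrix.of fun i j : Fin (p + 1) =>
        (((j : ℕ) + 1 : ℝ)) ^ ((i : ℕ) + 1) - ((j : ℕ) : ℝ) ^ ((i : ℕ) + 1)).det ≠ 0 := by
  set n := p + 1 with hn
  set v : Fin n → ℝ := fun j => (j : ℕ) + 1 with hv
  set M : Matrix (Fin n) (Fin n) ℝ :=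
    Matrix.of fun i j : Fin n =>
      (((j : ℕ) + 1 : ℝ)) ^ ((i : ℕ) + 1) - ((j : ℕ) : ℝ) ^ ((i : ℕ) + 1) with hM
  set U : Matrix (Fin n) (Fin n) ℝ :=
    Matrix.of fun k j : Fin n => if k ≤ j then (1 : ℝ) else 0 with hU
  have hUtri : U.BlockTriangular id := by
    intro k j h
    simp only [hU, Matrix.of_apply, ite_eq_right_iff]
    intro hle
    exact absurd (lt_of_le_of_lt hle h) (lt_irrefl _)
  have hUdet : U.det = 1 := by
    rw [Matrix.det_of_upperTriangular hUtri]
    simp [hU]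
  have hMU : M * U = (Matrix.vandermonde v).transpose * Matrix.diagonal v := by
    ext i j
    rw [Matrix.mul_apply, Matrix.mul_diagonal]
    have h1 : ∀ k : Fin n, M i k * U k j =
        (if (k : ℕ) ≤ (j : ℕ) then
          (((k : ℕ) + 1 : ℝ)) ^ ((i : ℕ) + 1) - ((k : ℕ) : ℝ) ^ ((i : ℕ) + 1) else 0) := by
      intro k
      simp only [hM, hU, Matrix.of_apply, Fin.le_def, mul_ite, mul_one, mul_zero]
    rw [Finset.sum_congr rfl fun k _ => h1 k]
    rw [Fin.sum_univ_eq_sum_range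
      (fun m => if m ≤ (j : ℕ) then
        ((m + 1 : ℝ)) ^ ((i : ℕ) + 1) - ((m : ℝ)) ^ ((i : ℕ) + 1) else 0)]
    rw [← Finset.sum_filter]
    have hfil : (Finset.range n).filter (fun m => m ≤ (j : ℕ)) =
        Finset.range ((j : ℕ) + 1) := by
      ext m
      simp [Nat.lt_succ_iff]
      intro h
      omega
    rw [hfil]
    have htel : ∑ m ∈ Finset.range ((j : ℕ) + 1),
        (((m : ℝ) + 1) ^ ((i : ℕ) + 1) - (m : ℝ) ^ ((i : ℕ) + 1)) =
        (((j : ℕ) : ℝ) + 1) ^ ((i : ℕ) + 1) - ((0 : ℝ)) ^ ((i : ℕ) + 1) := by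
      have := Finset.sum_range_sub (fun m => ((m : ℝ)) ^ ((i : ℕ) + 1)) ((j : ℕ) + 1)
      simpa [Nat.cast_add, Nat.cast_one] using this
    rw [htel]
    simp [Matrix.transpose_apply, Matrix.vandermonde, hv, pow_succ]
  have hV : (Matrix.vandermonde v).det ≠ 0 := by
    rw [Matrix.det_vandermonde_ne_zero_iff]
    intro a b hab
    simp only [hv] at hab
    have h2 : ((a : ℕ) : ℝ) = ((b : ℕ) : ℝ) := by linarith
    exact Fin.ext (Nat.cast_injective h2)
  have hD : (Matrix.diagonal v).det ≠ 0 := by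
    rw [Matrix.det_diagonal]
    apply Finset.prod_ne_zero_iff.mpr
    intro j _
    simp only [hv]
    positivity
  have := congrArg Matrix.det hMU
  rw [Matrix.det_mul, Matrix.det_mul, hUdet, mul_one, Matrix.det_transpose] at this
  rw [this]
  exact mul_ne_zero hV hD
end

section
/- Let p ∈ ℕ. Define Φ : ℝ^{p+2} → M_{(p+2)×(p+2)}(ℝ) by sending (x, y, t₁, …, t_p) to the lower-triangular unipotent matrix whose diagonal entries are 1, whose first column is (1, y, t₁, t₂, …, t_p)ᵀ, whose entry in row i and column j for 2 ≤ j ≤ i ≤ p+2 is x^{i−j}/(i−j)!, and whose entries above the diagonal are 0. Then for all a, b ∈ ℝ^{p+2}, Φ(a · b) = Φ(a) Φ(b), where a · b denotes the filiform group law. -/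
/-- The filiform group law on `ℝ^{p+2} = ℝ²_{x,y} × ℝ^p_t`:
`(x,y,t)·(ξ,η,τ) = (x+ξ, y+η, σ₁, …, σ_p)` where, for `k = 1, …, p` (the coordinate
`t_k` is stored at index `k+1`),
`σ_k = t_k + τ_k + (x^k/k!) η + Σ_{j=1}^{k-1} (x^{k−j}/(k−j)!) τ_j`. -/
noncomputable def filiformMul (p : ℕ) (a b : Fin (p + 2) → ℝ) : Fin (p + 2) → ℝ :=
  fun i =>
    if (i : ℕ) ≤ 1 then a i + b i
    else a i + b i + (a 0) ^ ((i : ℕ) - 1) / (Nat.factorial ((i : ℕ) - 1) : ℝ) * b 1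
      + ∑ j : Fin p,
          if (j : ℕ) + 3 ≤ (i : ℕ) then
            (a 0) ^ ((i : ℕ) - (j : ℕ) - 2) / (Nat.factorial ((i : ℕ) - (j : ℕ) - 2) : ℝ)
              * b ⟨(j : ℕ) + 2, by omega⟩
          else 0

/-- The map `Φ : ℝ^{p+2} → M_{(p+2)×(p+2)}(ℝ)` sending `(x, y, t₁, …, t_p)` to the
lower-triangular unipotent matrix whose first column is `(1, y, t₁, …, t_p)ᵀ` and whose
entry in row `i`, column `j` with `1 ≤ j ≤ i` (zero-based indexing) is `x^{i−j}/(i−j)!`,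
all entries above the diagonal being `0`. -/
noncomputable def filiformPhi (p : ℕ) (a : Fin (p + 2) → ℝ) : Matrix (Fin (p + 2)) (Fin (p + 2)) ℝ :=
  Matrix.of fun i j =>
    if (j : ℕ) = 0 then (if (i : ℕ) = 0 then 1 else a i)
    else if (j : ℕ) ≤ (i : ℕ) then
      (a 0) ^ ((i : ℕ) - (j : ℕ)) / (Nat.factorial ((i : ℕ) - (j : ℕ)) : ℝ)
    else 0

lemma key_sum (x y : ℝ) (n : ℕ) :
    ∑ m ∈ Finset.range (n + 1), x ^ (n - m) / (Nat.factorial (n - m) : ℝ) * (y ^ m / (Nat.factorial m : ℝ)) = (x + y) ^ n / (Nat.factorial n : ℝ) := by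
  rw [add_comm x y, add_pow, Finset.sum_div]
  refine Finset.sum_congr rfl fun m hm => ?_
  rw [Finset.mem_range] at hm
  have hm' : m ≤ n := Nat.lt_succ_iff.mp hm
  have h1 : (Nat.factorial m : ℝ) ≠ 0 := Nat.cast_ne_zero.mpr (Nat.factorial_ne_zero m)
  have h2 : (Nat.factorial (n - m) : ℝ) ≠ 0 := Nat.cast_ne_zero.mpr (Nat.factorial_ne_zero _)
  have h3 : (Nat.factorial n : ℝ) ≠ 0 := Nat.cast_ne_zero.mpr (Nat.factorial_ne_zero n)
  have hfac : ((n.choose m : ℝ)) = (Nat.factorial n : ℝ) / (Nat.factorial m * Nat.factorial (n - m)) := by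
    rw [eq_div_iff (by positivity)]
    norm_cast
    rw [← Nat.choose_mul_factorial_mul_factorial hm']; ring
  rw [hfac]
  field_simp


/-- `Φ` intertwines the filiform group law with matrix multiplication:
`Φ(a · b) = Φ(a) Φ(b)` for all `a, b ∈ ℝ^{p+2}`. -/
theorem filiform_matrix_representation (p : ℕ) (a b : Fin (p + 2) → ℝ) :
    filiformPhi p (filiformMul p a b) = filiformPhi p a * filiformPhi p b := by
  ext i j
  rw [Matrix.mul_apply]
  have h0 : filiformMul p a b 0 = a 0 + b 0 := by simp [filiformMul]
  have hi2 : (i : ℕ) < p + 2 := i.isLt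
  by_cases hj : (j : ℕ) = 0
  · -- column 0
    rw [Fin.sum_univ_succ]
    by_cases hi0 : (i : ℕ) = 0
    · simp [filiformPhi, hj, hi0, Fin.val_succ, (Fin.ext (by simp [hj]) : j = 0), (Fin.ext (by simp [hi0]) : i = 0)]
    · by_cases hi1 : (i : ℕ) = 1
      · rw [Fin.sum_univ_succ]
        have hib : i = 1 := Fin.ext (by simp [hi1])
        simp [filiformPhi, filiformMul, hj, hi0, hi1, Fin.val_succ, hib, filiformMul, (Fin.ext (by simp [hj]) : j = 0)]
        exact Finset.sum_eq_zero fun k _ => if_neg (by rw [Fin.le_def]; simp [Fin.val_succ, Fin.val_one])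
      · -- 2 ≤ i
        have hI : 2 ≤ (i : ℕ) := by omega
        rw [Fin.sum_univ_succ]
        simp only [filiformPhi, filiformMul, Matrix.of_apply, hj, hi0, Fin.val_succ,
          Fin.val_zero, Fin.isValue]
        simp only [if_true, if_false, if_pos (Nat.zero_le _), Nat.zero_add,
          show ¬((i:ℕ) ≤ 1) from by omega, if_neg (by omega : ¬((i:ℕ) ≤ 1)),
          Nat.sub_zero, Nat.add_eq_zero, Nat.succ_ne_zero, and_false, if_false,
          show ((0:ℕ)+1 = 0) = False from by simp, show (1:ℕ) ≤ (i:ℕ) from by omega,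
          if_pos (show (1:ℕ) ≤ (i:ℕ) from by omega)]
        have hbb : ∀ x : Fin p, ((⟨(x:ℕ)+2, by omega⟩ : Fin (p+2))) = x.succ.succ :=
          fun x => rfl
        simp only [hbb]
        have hb1 : b (Fin.succ 0) = b 1 := rfl
        have hsplit : ∀ x : Fin p,
            (if (x:ℕ)+1+1 ≤ (i:ℕ) then
                a 0 ^ ((i:ℕ) - ((x:ℕ)+1+1)) / (Nat.factorial ((i:ℕ) - ((x:ℕ)+1+1)) : ℝ) else 0)
              * b x.succ.succ
            = (if (x:ℕ)+3 ≤ (i:ℕ) then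
                a 0 ^ ((i:ℕ) - (x:ℕ) - 2) / (Nat.factorial ((i:ℕ) - (x:ℕ) - 2) : ℝ)
                  * b x.succ.succ else 0)
              + (if (x:ℕ)+2 = (i:ℕ) then b i else 0) := by
          intro x
          by_cases h1 : (x:ℕ)+3 ≤ (i:ℕ)
          · rw [if_pos (by omega), if_pos h1, if_neg (by omega), add_zero,
              show (i:ℕ) - ((x:ℕ)+1+1) = (i:ℕ) - (x:ℕ) - 2 from by omega]
          · by_cases h2 : (x:ℕ)+2 = (i:ℕ)
            · rw [if_pos (by omega), if_neg h1, if_pos h2, zero_add,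
                show (i:ℕ) - ((x:ℕ)+1+1) = 0 from by omega]
              have : x.succ.succ = i := Fin.ext (by simp [Fin.val_succ]; omega)
              rw [this]; simp
            · rw [if_neg (by omega), if_neg h1, if_neg h2, zero_mul, add_zero]
        rw [Finset.sum_congr rfl fun x _ => hsplit x, Finset.sum_add_distrib]
        have hone : (∑ x : Fin p, if (x:ℕ)+2 = (i:ℕ) then b i else 0) = b i := by
          have hlt : (i:ℕ) - 2 < p := by omega
          rw [Finset.sum_eq_single (⟨(i:ℕ)-2, hlt⟩ : Fin p)]
          · rw [if_pos (by simp; omega)]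
          · intro x _ hx; rw [if_neg]; intro hc; exact hx (Fin.ext (by simp; omega))
          · intro h; exact absurd (Finset.mem_univ _) h
        rw [hone, hb1]
        ring
  · -- columns ≥ 1
    have hterm : ∀ k : Fin (p+2),
        filiformPhi p a i k * filiformPhi p b k j
          = if (j:ℕ) ≤ (k:ℕ) ∧ (k:ℕ) ≤ (i:ℕ) then
              a 0 ^ ((i:ℕ) - (k:ℕ)) / (Nat.factorial ((i:ℕ) - (k:ℕ)) : ℝ)
                * (b 0 ^ ((k:ℕ) - (j:ℕ)) / (Nat.factorial ((k:ℕ) - (j:ℕ)) : ℝ))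
            else 0 := by
      intro k
      simp only [filiformPhi, Matrix.of_apply]
      rw [if_neg hj]
      by_cases hk0 : (k:ℕ) = 0
      · rw [if_pos hk0, if_neg (by omega : ¬ (j:ℕ) ≤ (k:ℕ)), mul_zero,
          if_neg (by omega)]
      · rw [if_neg hk0]
        split_ifs <;> first | ring1 | (exfalso; omega)
    rw [Finset.sum_congr rfl fun k _ => hterm k]
    rw [Fin.sum_univ_eq_sum_range (fun K => if (j:ℕ) ≤ K ∧ K ≤ (i:ℕ) then
              a 0 ^ ((i:ℕ) - K) / (Nat.factorial ((i:ℕ) - K) : ℝ)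
                * (b 0 ^ (K - (j:ℕ)) / (Nat.factorial (K - (j:ℕ)) : ℝ))
            else 0) (p+2)]
    simp only [filiformPhi, Matrix.of_apply]
    rw [if_neg hj]
    by_cases hij : (j:ℕ) ≤ (i:ℕ)
    · rw [if_pos hij, h0]
      rw [← Finset.sum_subset (Finset.range_subset_range.mpr (show (i:ℕ)+1 ≤ p+2 from by omega))
        (fun K _ hK => by simp only [Finset.mem_range, not_lt] at hK; exact if_neg (by omega))]
      rw [Finset.range_eq_Ico,
        ← Finset.sum_Ico_consecutive _ (Nat.zero_le (j:ℕ)) (by omega : (j:ℕ) ≤ (i:ℕ)+1)]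
      rw [Finset.sum_eq_zero (fun K hK => if_neg (by
        simp only [Finset.mem_Ico] at hK; omega)), zero_add]
      rw [Finset.sum_Ico_eq_sum_range,
        show (i:ℕ)+1-(j:ℕ) = ((i:ℕ)-(j:ℕ))+1 from by omega,
        ← key_sum (a 0) (b 0) ((i:ℕ)-(j:ℕ))]
      refine Finset.sum_congr rfl fun m hm => ?_
      rw [Finset.mem_range] at hm
      rw [if_pos ⟨by omega, by omega⟩,
        show (i:ℕ) - ((j:ℕ)+m) = (i:ℕ)-(j:ℕ)-m from by omega,
        show (j:ℕ)+m-(j:ℕ) = m from by omega]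
    · rw [if_neg hij]
      symm
      exact Finset.sum_eq_zero fun K _ => if_neg (by omega)
end

section
/- Let p ∈ ℕ with p ≥ 2, let q ∈ ℕ with q ≥ 1, and let η ∈ ℝ. Then every vector in the range of the Fréchet derivative of the multiexponential map Γ^{(q)} : (ℝ²)^q → ℝ^{p+2} at the point ((0,η), (0,η), …, (0,η)) has its coordinates τ₂, τ₃, …, τ_p (i.e., the last p−1 coordinates of ℝ^{p+2}) equal to zero. In particular, this Fréchet derivative is not surjective, so Γ^{(q)} is not a submersion at ((0,η),…,(0,η)) for any q. (This is the necessity part of the theorem: in the filiform group, the direction Z = uX + vY admits a submersive multiexponential only if u ≠ 0.) -/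
/-- Along any line through the constant point `((0,η),…,(0,η))`, the coordinate `i ≥ 3`
of `Γ^{(q)}` vanishes to second order, so its derivative at the point is `0`. -/
lemma filiform_key (p q : ℕ) (η : ℝ) (h : Fin q → ℝ × ℝ) (i : Fin (p + 2))
    (hi : 3 ≤ (i : ℕ)) :
    HasDerivAt (fun t : ℝ =>
      filiformGamma p q ((fun _ : Fin q => (((0:ℝ), η) : ℝ × ℝ)) + t • h) i) 0 0 := by
  set k := (i : ℕ) - 1 with hkdef
  have hk : 2 ≤ k := by omega
  have hi0 : (i : ℕ) ≠ 0 := by omega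
  have hi1 : (i : ℕ) ≠ 1 := by omega
  set a : Fin q → ℝ := fun j => (h j).1 with ha
  set b : Fin q → ℝ := fun j => (h j).2 with hb
  set A : Fin q → ℝ := fun j => ∑ i' ∈ Finset.univ.filter (fun i' => i' < j), a i' with hA
  set c : Fin q → ℝ := fun j => ∫ s in (0:ℝ)..1, (A j + s * a j) ^ k / (Nat.factorial k : ℝ)
    with hc
  have heq : (fun t : ℝ =>
      filiformGamma p q ((fun _ : Fin q => (((0:ℝ), η) : ℝ × ℝ)) + t • h) i)
      = fun t : ℝ => t ^ k * ∑ j, (η + t * b j) * c j := by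
    funext t
    simp only [filiformGamma, hi0, hi1, if_false, Pi.add_apply, Pi.smul_apply,
      Prod.fst_add, Prod.snd_add, Prod.smul_fst, Prod.smul_snd, smul_eq_mul]
    rw [Finset.mul_sum]
    refine Finset.sum_congr rfl fun j _ => ?_
    have hint : (∫ s in (0:ℝ)..1,
        ((∑ i' ∈ Finset.univ.filter (fun i' => i' < j), ((0:ℝ) + t * (h i').1))
          + s * ((0:ℝ) + t * (h j).1)) ^ k / (Nat.factorial k : ℝ))
        = t ^ k * c j := by
      rw [hc]
      rw [← intervalIntegral.integral_const_mul]
      refine intervalIntegral.integral_congr fun s _ => ?_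
      have h1 : (∑ i' ∈ Finset.univ.filter (fun i' => i' < j), ((0:ℝ) + t * (h i').1))
          = t * A j := by
        rw [hA, Finset.mul_sum]
        exact Finset.sum_congr rfl fun i' _ => by rw [ha]; ring
      rw [h1]
      have h2 : t * A j + s * ((0:ℝ) + t * (h j).1) = t * (A j + s * a j) := by
        rw [ha]; ring
      rw [h2, mul_pow, mul_div_assoc]
    rw [hint, hb]
    ring
  rw [heq]
  have h1 : HasDerivAt (fun t : ℝ => t ^ k) 0 0 := by
    have := hasDerivAt_pow k (0 : ℝ)
    simpa [zero_pow (show k - 1 ≠ 0 by omega)] using this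
  have h2 : HasDerivAt (fun t : ℝ => ∑ j, (η + t * b j) * c j) (∑ j, b j * c j) 0 := by
    apply HasDerivAt.fun_sum
    intro j _
    have : HasDerivAt (fun t : ℝ => η + t * b j) (b j) 0 := by
      simpa using ((hasDerivAt_id (0:ℝ)).mul_const (b j)).const_add η
    simpa using this.mul_const (c j)
  have := h1.fun_mul h2
  simpa [zero_pow (show k ≠ 0 by omega)] using this

/-- Let `p ≥ 2`, `q ≥ 1` and `η ∈ ℝ`.  Every vector in the range of the
Fréchet derivative of `Γ^{(q)}` at the constant point `((0,η), …, (0,η))` has its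
coordinates `τ₂, …, τ_p` (i.e. the coordinates of `ℝ^{p+2}` of index `≥ 3`) equal to
zero; in particular this derivative is not surjective, so `Γ^{(q)}` is not a submersion
at `((0,η), …, (0,η))` for any `q`. -/
theorem filiform_multiexponential_not_submersion_vertical (p q : ℕ) (hp : 2 ≤ p)
    (hq : 1 ≤ q) (η : ℝ) :
    (∀ y ∈ Set.range ⇑(fderiv ℝ (filiformGamma p q) (fun _ : Fin q => (((0:ℝ), η) : ℝ × ℝ))),
        ∀ i : Fin (p + 2), 3 ≤ (i : ℕ) → y i = 0) ∧
      ¬ Function.Surjective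
          ⇑(fderiv ℝ (filiformGamma p q) (fun _ : Fin q => (((0:ℝ), η) : ℝ × ℝ))) := by
  set x : Fin q → ℝ × ℝ := fun _ => (((0:ℝ), η) : ℝ × ℝ) with hx
  have main : ∀ y ∈ Set.range ⇑(fderiv ℝ (filiformGamma p q) x),
      ∀ i : Fin (p + 2), 3 ≤ (i : ℕ) → y i = 0 := by
    rintro y ⟨h, rfl⟩ i hi
    by_cases hd : DifferentiableAt ℝ (filiformGamma p q) x
    · have hF := hd.hasFDerivAt
      have hproj : HasFDerivAt (fun w => filiformGamma p q w i)
          ((ContinuousLinearMap.proj i).comp (fderiv ℝ (filiformGamma p q) x)) x :=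
        ((ContinuousLinearMap.proj i : (Fin (p + 2) → ℝ) →L[ℝ] ℝ).hasFDerivAt).comp x hF
      have hγ : HasDerivAt (fun t : ℝ => x + t • h) h 0 := by
        have : HasDerivAt (fun t : ℝ => t • h) ((1:ℝ) • h) 0 :=
          (hasDerivAt_id (0:ℝ)).smul_const h
        simpa using this.const_add x
      have hproj' : HasFDerivAt (fun w => filiformGamma p q w i)
          ((ContinuousLinearMap.proj i).comp (fderiv ℝ (filiformGamma p q) x))
          (x + (0:ℝ) • h) := by simpa using hproj
      have hcomp : HasDerivAt (fun t : ℝ => filiformGamma p q (x + t • h) i)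
          (((ContinuousLinearMap.proj i).comp (fderiv ℝ (filiformGamma p q) x)) h) 0 := by
        simpa [Function.comp_def] using hproj'.comp_hasDerivAt 0 hγ
      have hzero := filiform_key p q η h i hi
      have := hzero.unique hcomp
      simpa using this.symm
    · simp [fderiv_zero_of_not_differentiableAt hd]
  refine ⟨main, fun hs => ?_⟩
  obtain ⟨h, hh⟩ := hs (fun _ => 1)
  have h3 : ((⟨3, by omega⟩ : Fin (p + 2)) : ℕ) = 3 := rfl
  have := main _ ⟨h, rfl⟩ ⟨3, by omega⟩ (by omega)
  rw [hh] at this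
  exact one_ne_zero this
end

section
/- Let Q : ℝ^m × ℝ^m → ℝ^ℓ be bilinear and alternating, let p ∈ ℕ, and define G : (ℝ^m)^p → ℝ^m × ℝ^ℓ by G(u₁,…,u_p) = (Σ_{j=1}^p u_j, Σ_{1≤j<k≤p} Q(u_j, u_k)). Then for every ū ∈ ℝ^m, the Fréchet derivative of G at (ū, ū, …, ū) is the linear map (h₁,…,h_p) ↦ (Σ_{j=1}^p h_j, Q(ū, Σ_{j=1}^p (2j−p−1) h_j)). Consequently, if the linear map y ↦ Q(ū, y) from ℝ^m to ℝ^ℓ is not surjective, then for every p ∈ ℕ the Fréchet derivative of G at (ū,…,ū) is not surjective, i.e., the p-th multiexponential of the step-two group is not a submersion at (ū,…,ū). -/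
/-- Let `Q : ℝ^m × ℝ^m → ℝ^ℓ` be bilinear and alternating, and let
`G(u₁,…,u_p) = (Σ_j u_j, Σ_{j<k} Q(u_j, u_k))` be the `p`-th multiexponential of the
associated step-two Carnot group.  Then for every `ū ∈ ℝ^m`, the Fréchet derivative of
`G` at `(ū, …, ū)` is `(h₁,…,h_p) ↦ (Σ_j h_j, Q(ū, Σ_j (2j−p−1) h_j))` (with `1`-based
index `j`; below `j : Fin p` is `0`-based, so the coefficient reads `2j+1−p`).
Consequently, if `y ↦ Q(ū, y)` is not surjective, then this Fréchet derivative is not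
surjective either, i.e. the `p`-th multiexponential is not a submersion at `(ū,…,ū)`. -/
theorem step_two_multiexponential_derivative (m l p : ℕ)
    (Q : (Fin m → ℝ) →ₗ[ℝ] (Fin m → ℝ) →ₗ[ℝ] (Fin l → ℝ))
    (hQ : ∀ z, Q z z = 0)
    (G : (Fin p → Fin m → ℝ) → (Fin m → ℝ) × (Fin l → ℝ))
    (hG : ∀ u, G u = (∑ j, u j, ∑ j : Fin p, ∑ k ∈ Finset.Ioi j, Q (u j) (u k)))
    (ub : Fin m → ℝ) :
    (∀ h : Fin p → Fin m → ℝ,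
        fderiv ℝ G (fun _ => ub) h
          = (∑ j, h j, Q ub (∑ j : Fin p, ((2 * ((j : ℕ) : ℝ) + 1 - p) • h j)))) ∧
      (¬ Function.Surjective ⇑(Q ub) →
        ¬ Function.Surjective ⇑(fderiv ℝ G (fun _ => ub))) := by
  classical
  let E := (Fin p → Fin m → ℝ)
  let x0 : E := (fun _ => ub)
  -- continuous bilinear version of Q
  let B : (Fin m → ℝ) →L[ℝ] (Fin m → ℝ) →L[ℝ] (Fin l → ℝ) :=
    LinearMap.toContinuousLinearMap
      ((LinearMap.toContinuousLinearMap :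
          ((Fin m → ℝ) →ₗ[ℝ] (Fin l → ℝ)) ≃ₗ[ℝ] ((Fin m → ℝ) →L[ℝ] (Fin l → ℝ))).toLinearMap
        ∘ₗ Q)
  have hB : ∀ x y, B x y = Q x y := fun _ _ => rfl
  -- the candidate derivative
  let L1 : E →L[ℝ] (Fin m → ℝ) := ∑ j, ContinuousLinearMap.proj j
  let L2 : E →L[ℝ] (Fin l → ℝ) :=
    ∑ j : Fin p, ∑ k ∈ Finset.Ioi j,
      (B.precompR E ub (ContinuousLinearMap.proj k)
        + B.precompL E (ContinuousLinearMap.proj j) ub)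
  have hd1 : HasFDerivAt (fun u : E => ∑ j, u j) L1 x0 :=
    HasFDerivAt.fun_sum fun j _ => (ContinuousLinearMap.proj j : E →L[ℝ] _).hasFDerivAt
  have hd2 : HasFDerivAt
      (fun u : E => ∑ j : Fin p, ∑ k ∈ Finset.Ioi j, Q (u j) (u k)) L2 x0 := by
    refine HasFDerivAt.fun_sum fun j _ => HasFDerivAt.fun_sum fun k _ => ?_
    have := ContinuousLinearMap.hasFDerivAt_of_bilinear B
      (ContinuousLinearMap.proj j : E →L[ℝ] (Fin m → ℝ)).hasFDerivAt
      (ContinuousLinearMap.proj k : E →L[ℝ] (Fin m → ℝ)).hasFDerivAt (x := x0)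
    simpa [hB] using this
  have hGfun : G = fun u : E =>
      ((∑ j, u j, ∑ j : Fin p, ∑ k ∈ Finset.Ioi j, Q (u j) (u k)) :
        (Fin m → ℝ) × (Fin l → ℝ)) := funext hG
  have hdG : HasFDerivAt G (L1.prod L2) x0 := by
    rw [hGfun]; exact hd1.prodMk hd2
  have hf : fderiv ℝ G x0 = L1.prod L2 := hdG.fderiv
  -- skew-symmetry
  have skew : ∀ x y, Q x y = - Q y x := by
    intro x y
    have h0 : Q x y + Q y x = 0 := by
      have := hQ (x + y)
      simp only [map_add, LinearMap.add_apply, hQ] at this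
      rw [← this]; abel
    linear_combination h0
  -- the key computation of L2
  have hL2 : ∀ h : E, L2 h = Q ub (∑ j : Fin p, ((2 * ((j : ℕ) : ℝ) + 1 - p) • h j)) := by
    intro h
    have happ : L2 h = ∑ j : Fin p, ∑ k ∈ Finset.Ioi j, (Q ub (h k) + Q (h j) ub) := by
      simp [L2, ContinuousLinearMap.sum_apply, ContinuousLinearMap.precompR,
        ContinuousLinearMap.precompL, hB, ContinuousLinearMap.proj_apply, E]
    rw [happ]
    have step1 : ∑ j : Fin p, ∑ k ∈ Finset.Ioi j, (Q ub (h k) + Q (h j) ub)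
        = Q ub (∑ j : Fin p, ∑ k ∈ Finset.Ioi j, (h k - h j)) := by
      rw [map_sum]
      refine Finset.sum_congr rfl fun j _ => ?_
      rw [map_sum]
      refine Finset.sum_congr rfl fun k _ => ?_
      rw [map_sub, skew (h j) ub]
      abel
    rw [step1]
    congr 1
    -- the combinatorial identity
    simp only [Finset.sum_sub_distrib]
    have h1 : ∑ j : Fin p, ∑ k ∈ Finset.Ioi j, h k
        = ∑ k : Fin p, ((k : ℕ) : ℝ) • h k := by
      rw [Finset.sum_comm' (t' := Finset.univ) (s' := fun k => Finset.Iio k)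
        (by intro x y; simp)]
      refine Finset.sum_congr rfl fun k _ => ?_
      rw [Finset.sum_const, Fin.card_Iio, ← Nat.cast_smul_eq_nsmul ℝ]
    have h2 : ∑ j : Fin p, ∑ k ∈ Finset.Ioi j, h j
        = ∑ j : Fin p, (((p - 1 - (j : ℕ) : ℕ)) : ℝ) • h j := by
      refine Finset.sum_congr rfl fun j _ => ?_
      rw [Finset.sum_const, Fin.card_Ioi, ← Nat.cast_smul_eq_nsmul ℝ]
    rw [h1, h2, ← Finset.sum_sub_distrib]
    refine Finset.sum_congr rfl fun j _ => ?_
    rw [← sub_smul]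
    congr 1
    have hj : (j : ℕ) < p := j.isLt
    have hc : ((p - 1 - (j : ℕ) : ℕ) : ℝ) = (p : ℝ) - 1 - (j : ℕ) := by
      have h' : p - 1 - (j : ℕ) = p - (1 + (j : ℕ)) := by omega
      rw [h', Nat.cast_sub (by omega)]
      push_cast; ring
    rw [hc]; ring
  have hmain : ∀ h : E, fderiv ℝ G x0 h
      = (∑ j, h j, Q ub (∑ j : Fin p, ((2 * ((j : ℕ) : ℝ) + 1 - p) • h j))) := by
    intro h
    rw [hf]
    refine Prod.ext ?_ ?_
    · simp [L1, ContinuousLinearMap.sum_apply, ContinuousLinearMap.proj_apply, E]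
    · exact hL2 h
  refine ⟨hmain, fun hns hs => hns ?_⟩
  intro y
  obtain ⟨h, hh⟩ := hs (0, y)
  have h2 := hmain h
  rw [hh] at h2
  exact ⟨_, (Prod.ext_iff.mp h2.symm).2⟩
end

section
/- Let Q : ℝ^m × ℝ^m → ℝ^ℓ be bilinear and alternating, and assume span{Q(e_j, e_k) : 1 ≤ j < k ≤ m} = ℝ^ℓ. Then there exist p ∈ ℕ and C > 0 such that for every ξ ∈ ℝ^m and every (z, t) ∈ ℝ^m × ℝ^ℓ, there exist u₁, …, u_p ∈ ℝ^m satisfying: (i) Σ_{j=1}^p u_j = z; (ii) Q(Σ_{j=1}^p (p−2j+1) u_j, ξ) + Σ_{1≤j<k≤p} Q(u_j, u_k) = t + Q(pξ, z); and (iii) Σ_{j=1}^p |u_j| ≤ C(|z| + |t|^{1/2}). (The constants p and C are independent of ξ, z, t.) -/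
open Finset
set_option linter.unusedSectionVars false
set_option linter.unusedTactic false
set_option maxHeartbeats 1000000

section helpers
variable {E F : Type*} [NormedAddCommGroup E] [NormedSpace ℝ E] [AddCommGroup F] [Module ℝ F]




variable (B : E →ₗ[ℝ] E →ₗ[ℝ] F)

lemma ioi_sum_eq (q : ℕ) (f : Fin q → Fin q → F) :
    ∑ j, ∑ k ∈ Finset.Ioi j, f j k = ∑ j, ∑ k, if j < k then f j k else 0 := by
  refine Finset.sum_congr rfl fun j _ => ?_
  rw [← Finset.sum_filter]
  refine Finset.sum_congr ?_ fun _ _ => rfl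
  ext k; simp

lemma F_snoc (p : ℕ) (u : Fin p → E) (v : E) :
    ∑ j : Fin (p+1), ∑ k ∈ Finset.Ioi j, B ((Fin.snoc u v : Fin (p+1) → E) j) ((Fin.snoc u v : Fin (p+1) → E) k)
      = (∑ j : Fin p, ∑ k ∈ Finset.Ioi j, B (u j) (u k)) + B (∑ j, u j) v := by
  rw [ioi_sum_eq, ioi_sum_eq, Fin.sum_univ_castSucc]
  have h2 : (∑ k : Fin (p+1), if Fin.last p < k then
      B ((Fin.snoc u v : Fin (p+1) → E) (Fin.last p)) ((Fin.snoc u v : Fin (p+1) → E) k) else 0) = 0 := by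
    apply Finset.sum_eq_zero; intro k _
    rw [if_neg (not_lt.2 (Fin.le_last k))]
  rw [h2, add_zero]
  have h1 : ∀ j : Fin p, (∑ k : Fin (p+1), if Fin.castSucc j < k then
      B ((Fin.snoc u v : Fin (p+1) → E) (Fin.castSucc j)) ((Fin.snoc u v : Fin (p+1) → E) k) else 0)
      = (∑ k, if j < k then B (u j) (u k) else 0) + B (u j) v := by
    intro j
    rw [Fin.sum_univ_castSucc]
    simp [Fin.castSucc_lt_castSucc_iff, Fin.castSucc_lt_last]
  rw [Finset.sum_congr rfl fun j _ => h1 j, Finset.sum_add_distrib, map_sum]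
  simp [LinearMap.sum_apply]

lemma S_snoc (p : ℕ) (u : Fin p → E) (v : E) :
    ∑ j : Fin (p+1), (Fin.snoc u v : Fin (p+1) → E) j = (∑ j, u j) + v := by
  rw [Fin.sum_univ_castSucc]; simp

lemma W_snoc (p : ℕ) (u : Fin p → E) (v : E) :
    ∑ j : Fin (p+1), ((j : ℕ) : ℝ) • (Fin.snoc u v : Fin (p+1) → E) j
      = (∑ j : Fin p, ((j : ℕ) : ℝ) • u j) + (p : ℝ) • v := by
  rw [Fin.sum_univ_castSucc]; simp

lemma anti (hB : ∀ x, B x x = 0) (x y : E) : B x y = - B y x := by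
  have h := hB (x + y)
  simp only [map_add, LinearMap.add_apply, hB, zero_add, add_zero] at h
  exact eq_neg_of_add_eq_zero_left (by rw [add_comm]; exact h)




lemma N_snoc (p : ℕ) (u : Fin p → E) (v : E) :
    ∑ j : Fin (p+1), ‖(Fin.snoc u v : Fin (p+1) → E) j‖ = (∑ j, ‖u j‖) + ‖v‖ := by
  rw [Fin.sum_univ_castSucc]; simp



lemma append1 (p : ℕ) (u : Fin p → E) (v : E) :
    ∃ u' : Fin (p+1) → E,
      (∑ j, u' j) = (∑ j, u j) + v ∧
      (∑ j : Fin (p+1), ((j:ℕ):ℝ) • u' j) = (∑ j : Fin p, ((j:ℕ):ℝ) • u j) + (p:ℝ) • v ∧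
      (∑ j : Fin (p+1), ∑ k ∈ Finset.Ioi j, B (u' j) (u' k))
        = (∑ j : Fin p, ∑ k ∈ Finset.Ioi j, B (u j) (u k)) + B (∑ j, u j) v ∧
      (∑ j, ‖u' j‖) = (∑ j, ‖u j‖) + ‖v‖ :=
  ⟨(Fin.snoc u v : Fin (p+1) → E), S_snoc p u v, W_snoc p u v, F_snoc B p u v, N_snoc p u v⟩

lemma append8 (hB : ∀ x, B x x = 0) (p : ℕ) (u : Fin p → E) (a b : E) :
    ∃ u' : Fin (p+8) → E,
      (∑ j, u' j) = (∑ j, u j) ∧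
      (∑ j : Fin (p+8), ((j:ℕ):ℝ) • u' j) = (∑ j : Fin p, ((j:ℕ):ℝ) • u j) ∧
      (∑ j : Fin (p+8), ∑ k ∈ Finset.Ioi j, B (u' j) (u' k))
        = (∑ j : Fin p, ∑ k ∈ Finset.Ioi j, B (u j) (u k)) + (4:ℝ) • B a b ∧
      (∑ j, ‖u' j‖) = (∑ j, ‖u j‖) + 4*(‖a‖+‖b‖) := by
  obtain ⟨u1, s1, w1, f1, n1⟩ := append1 B p u a
  obtain ⟨u2, s2, w2, f2, n2⟩ := append1 B (p+1) u1 b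
  obtain ⟨u3, s3, w3, f3, n3⟩ := append1 B (p+2) u2 (-a)
  obtain ⟨u4, s4, w4, f4, n4⟩ := append1 B (p+3) u3 (-b)
  obtain ⟨u5, s5, w5, f5, n5⟩ := append1 B (p+4) u4 (-a)
  obtain ⟨u6, s6, w6, f6, n6⟩ := append1 B (p+5) u5 (-b)
  obtain ⟨u7, s7, w7, f7, n7⟩ := append1 B (p+6) u6 a
  obtain ⟨u8, s8, w8, f8, n8⟩ := append1 B (p+7) u7 b
  refine ⟨u8, ?_, ?_, ?_, ?_⟩
  · rw [s8, s7, s6, s5, s4, s3, s2, s1]; abel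
  · rw [w8, w7, w6, w5, w4, w3, w2, w1]
    push_cast
    module
  · rw [f8, f7, f6, f5, f4, f3, f2, f1,
      s7, s6, s5, s4, s3, s2, s1]
    have hba : B b a = - B a b := anti B hB b a
    simp only [map_add, map_neg, LinearMap.add_apply, LinearMap.neg_apply, hB, hba]
    module
  · rw [n8, n7, n6, n5, n4, n3, n2, n1]
    simp only [norm_neg]; ring


lemma blocks (hB : ∀ x, B x x = 0) (N : ℕ) (a b : Fin N → E) (x y : E) :
    ∃ u : Fin (2+8*N) → E,
      (∑ j, u j) = x + y ∧
      (∑ j : Fin (2+8*N), ((j:ℕ):ℝ) • u j) = y ∧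
      (∑ j : Fin (2+8*N), ∑ k ∈ Finset.Ioi j, B (u j) (u k))
        = B x y + ∑ i, (4:ℝ) • B (a i) (b i) ∧
      (∑ j, ‖u j‖) = ‖x‖ + ‖y‖ + ∑ i, 4*(‖a i‖+‖b i‖) := by
  induction N with
  | zero =>
      refine ⟨(![x, y] : Fin 2 → E), ?_, ?_, ?_, ?_⟩
      · show (∑ j : Fin 2, ![x,y] j) = x + y
        simp [Fin.sum_univ_two]
      · show (∑ j : Fin 2, ((j:ℕ):ℝ) • ![x,y] j) = y
        simp [Fin.sum_univ_two]
      · show (∑ j : Fin 2, ∑ k ∈ Finset.Ioi j, B (![x,y] j) (![x,y] k)) = B x y + ∑ i : Fin 0, (4:ℝ) • B (a i) (b i)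
        rw [Fin.sum_univ_two]
        have h0 : Finset.Ioi (0 : Fin 2) = {1} := by decide
        have h1 : Finset.Ioi (1 : Fin 2) = ∅ := by decide
        rw [h0, h1]
        simp
      · show (∑ j : Fin 2, ‖![x,y] j‖) = ‖x‖ + ‖y‖ + ∑ i : Fin 0, 4*(‖a i‖+‖b i‖)
        simp [Fin.sum_univ_two]
  | succ N ih =>
      obtain ⟨u, hs, hw, hf, hn⟩ := ih (fun i => a i.castSucc) (fun i => b i.castSucc)
      obtain ⟨u', hs', hw', hf', hn'⟩ := append8 B hB (2+8*N) u (a (Fin.last N)) (b (Fin.last N))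
      refine ⟨u', ?_, ?_, ?_, ?_⟩
      · show (∑ j : Fin (2+8*N+8), u' j) = x + y
        rw [hs', hs]
      · show (∑ j : Fin (2+8*N+8), ((j:ℕ):ℝ) • u' j) = y
        rw [hw', hw]
      · show (∑ j : Fin (2+8*N+8), ∑ k ∈ Finset.Ioi j, B (u' j) (u' k))
            = B x y + ∑ i : Fin (N+1), (4:ℝ) • B (a i) (b i)
        rw [hf', hf, Fin.sum_univ_castSucc, add_assoc]
      · show (∑ j : Fin (2+8*N+8), ‖u' j‖) = ‖x‖ + ‖y‖ + ∑ i : Fin (N+1), 4*(‖a i‖+‖b i‖)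
        rw [hn', hn, Fin.sum_univ_castSucc]; ring

end helpers


/-- Let `Q : ℝ^m × ℝ^m → ℝ^ℓ` be bilinear, alternating, and satisfy
the Hörmander condition `span{Q(e_j, e_k) : j < k} = ℝ^ℓ`.  Then there exist `p ∈ ℕ`
and `C > 0` such that for every `ξ ∈ ℝ^m` and every `(z,t) ∈ ℝ^m × ℝ^ℓ`, the system
`Σ_j u_j = z`, `Q(Σ_j (p−2j+1) u_j, ξ) + Σ_{j<k} Q(u_j, u_k) = t + Q(pξ, z)` has a
solution `u₁, …, u_p` with `Σ_j |u_j| ≤ C(|z| + |t|^{1/2})` (Euclidean norms; the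
`1`-based coefficient `p−2j+1` reads `p−2j−1` for `0`-based `j : Fin p`). -/
theorem step_two_system_solvable_with_xi (m l : ℕ)
    (Q : EuclideanSpace ℝ (Fin m) →ₗ[ℝ] EuclideanSpace ℝ (Fin m) →ₗ[ℝ] EuclideanSpace ℝ (Fin l))
    (hQ : ∀ z, Q z z = 0)
    (hspan : Submodule.span ℝ {x : EuclideanSpace ℝ (Fin l) |
        ∃ j k : Fin m, j < k ∧
          x = Q (EuclideanSpace.single j 1) (EuclideanSpace.single k 1)} = ⊤) :
    ∃ (p : ℕ) (C : ℝ), 0 < C ∧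
      ∀ (ξ z : EuclideanSpace ℝ (Fin m)) (t : EuclideanSpace ℝ (Fin l)),
        ∃ u : Fin p → EuclideanSpace ℝ (Fin m),
          (∑ j, u j) = z ∧
          Q (∑ j : Fin p, (((p : ℝ) - 2 * ((j : ℕ) : ℝ) - 1) • u j)) ξ
              + ∑ j : Fin p, ∑ k ∈ Finset.Ioi j, Q (u j) (u k)
            = t + Q ((p : ℝ) • ξ) z ∧
          ∑ j, ‖u j‖ ≤ C * (‖z‖ + Real.sqrt ‖t‖) := by
  classical
  set V := EuclideanSpace ℝ (Fin l)
  obtain ⟨s, hsub, hspan2, hli⟩ := exists_linearIndependent ℝ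
    {x : V | ∃ j k : Fin m, j < k ∧
      x = Q (EuclideanSpace.single j 1) (EuclideanSpace.single k 1)}
  rw [hspan] at hspan2
  have hfin : s.Finite := hli.setFinite
  haveI : Fintype s := hfin.fintype
  set N := Fintype.card s with hN
  set e : Fin N ≃ s := (Fintype.equivFin s).symm with he
  have hmem : ∀ i : Fin N, ∃ jj kk : Fin m, jj < kk ∧
      ((e i : V) = Q (EuclideanSpace.single jj 1) (EuclideanSpace.single kk 1)) :=
    fun i => hsub (e i).2
  choose jj kk hlt hval using hmem
  have hspan3 : ⊤ ≤ Submodule.span ℝ (Set.range ((↑) : s → V)) := by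
    rw [Subtype.range_coe]; exact hspan2.ge
  set bas : Module.Basis s ℝ V := Module.Basis.mk hli hspan3 with hbas
  set B' : Module.Basis (Fin N) ℝ V := bas.reindex e.symm with hB'
  have hB'val : ∀ i, B' i = Q (EuclideanSpace.single (jj i) 1) (EuclideanSpace.single (kk i) 1) := by
    intro i
    rw [hB', Module.Basis.reindex_apply, Equiv.symm_symm, hbas, Module.Basis.mk_apply]
    exact hval i
  set K : ℝ := (∑ i, ‖LinearMap.toContinuousLinearMap (B'.coord i)‖) + 1 with hKdef
  have hK0 : ∀ i : Fin N, ‖LinearMap.toContinuousLinearMap (B'.coord i)‖ ≤ K := by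
    intro i
    rw [hKdef]
    have h1 : ‖LinearMap.toContinuousLinearMap (B'.coord i)‖
        ≤ ∑ i, ‖LinearMap.toContinuousLinearMap (B'.coord i)‖ :=
      Finset.single_le_sum (f := fun i => ‖LinearMap.toContinuousLinearMap (B'.coord i)‖)
        (fun i _ => norm_nonneg _) (Finset.mem_univ i)
    linarith
  have hK1 : (1:ℝ) ≤ K := by
    rw [hKdef]
    have : (0:ℝ) ≤ ∑ i, ‖LinearMap.toContinuousLinearMap (B'.coord i)‖ :=
      Finset.sum_nonneg fun i _ => norm_nonneg _
    linarith
  have hKrepr : ∀ (t : V) (i : Fin N), |B'.repr t i| ≤ K * ‖t‖ := by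
    intro t i
    have h1 : |B'.repr t i| = ‖LinearMap.toContinuousLinearMap (B'.coord i) t‖ := by
      rw [LinearMap.coe_toContinuousLinearMap']
      simp [Module.Basis.coord_apply, Real.norm_eq_abs]
    rw [h1]
    calc ‖LinearMap.toContinuousLinearMap (B'.coord i) t‖
        ≤ ‖LinearMap.toContinuousLinearMap (B'.coord i)‖ * ‖t‖ :=
          ContinuousLinearMap.le_opNorm _ _
      _ ≤ K * ‖t‖ := mul_le_mul_of_nonneg_right (hK0 i) (norm_nonneg _)
  refine ⟨2+8*N, (1+2*((2+8*N : ℕ):ℝ)) + 4*(N:ℝ)*Real.sqrt K, by positivity, ?_⟩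
  intro ξ z t
  set P : ℕ := 2+8*N with hP
  set α : ℝ := (2*(P:ℝ)-1)/2 with hα
  set τ : Fin N → ℝ := fun i => B'.repr t i with hτ
  set a : Fin N → EuclideanSpace ℝ (Fin m) := fun i =>
    (τ i / (2*Real.sqrt |τ i|)) • EuclideanSpace.single (jj i) 1 with ha
  set b : Fin N → EuclideanSpace ℝ (Fin m) := fun i =>
    (Real.sqrt |τ i| / 2) • EuclideanSpace.single (kk i) 1 with hb
  obtain ⟨u, hs, hw, hf, hn⟩ := blocks Q hQ N a b (z - α • z) (α • z)
  have hSz : (∑ j, u j) = z := by rw [hs]; abel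
  refine ⟨u, hSz, ?_, ?_⟩
  · have h4 : ∀ i : Fin N, (4:ℝ) • Q (a i) (b i) = τ i • B' i := by
      intro i
      rw [ha, hb]
      simp only [map_smul, LinearMap.smul_apply]
      rw [← hB'val i, smul_smul, smul_smul]
      rcases eq_or_ne (τ i) 0 with h0 | h0
      · rw [h0]; norm_num
      · have hpos : 0 < Real.sqrt |τ i| := Real.sqrt_pos.2 (abs_pos.2 h0)
        congr 1
        field_simp
        ring
    have hfq : (∑ j : Fin P, ∑ k ∈ Finset.Ioi j, Q (u j) (u k)) = t := by
      rw [hf]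
      have hxy : Q (z - α • z) (α • z) = 0 := by
        simp [map_sub, map_smul, LinearMap.smul_apply, hQ]
      rw [hxy, zero_add]
      rw [Finset.sum_congr rfl fun i _ => h4 i]
      exact B'.sum_repr t
    have hcsum : (∑ j : Fin P, (((P : ℕ):ℝ) - 2 * ((j : ℕ) : ℝ) - 1) • u j)
        = (-((P:ℕ):ℝ)) • z := by
      have step : ∀ j : Fin P, (((P : ℕ):ℝ) - 2 * ((j : ℕ) : ℝ) - 1) • u j
          = (((P:ℕ):ℝ) - 1) • u j - (2:ℝ) • (((j : ℕ):ℝ) • u j) := by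
        intro j
        rw [smul_smul, ← sub_smul]
        congr 1
        ring
      rw [Finset.sum_congr rfl fun j _ => step j, Finset.sum_sub_distrib,
        ← Finset.smul_sum, ← Finset.smul_sum, hSz, hw, hα]
      match_scalars
      push_cast
      ring
    rw [hcsum, hfq]
    have hanti : Q z ξ = - Q ξ z := anti Q hQ z ξ
    simp only [map_smul, map_neg, LinearMap.smul_apply, LinearMap.neg_apply, hanti]
    module
  · rw [hn]
    have hP1 : (1:ℝ) ≤ ((P:ℕ):ℝ) := by
      have : 1 ≤ P := by omega
      exact_mod_cast this
    have hynorm : ‖α • z‖ ≤ (P:ℝ) * ‖z‖ := by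
      rw [norm_smul, Real.norm_eq_abs]
      have h1 : |α| ≤ (P:ℝ) := by
        rw [hα, abs_of_nonneg (by linarith)]
        linarith
      exact mul_le_mul_of_nonneg_right h1 (norm_nonneg _)
    have hxnorm : ‖z - α • z‖ ≤ ‖z‖ + ‖α • z‖ := norm_sub_le _ _
    have habi : ∀ i : Fin N, 4*(‖a i‖+‖b i‖) ≤ 4*(Real.sqrt K * Real.sqrt ‖t‖) := by
      intro i
      have hbn : ‖b i‖ = Real.sqrt |τ i| / 2 := by
        rw [hb]
        simp only [norm_smul, Real.norm_eq_abs, EuclideanSpace.norm_single, norm_one, mul_one]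
        rw [abs_of_nonneg (by positivity)]
      have han : ‖a i‖ ≤ Real.sqrt |τ i| / 2 := by
        rw [ha]
        simp only [norm_smul, Real.norm_eq_abs, EuclideanSpace.norm_single, norm_one, mul_one]
        rcases eq_or_ne (τ i) 0 with h0 | h0
        · rw [h0]; simp
        · have hpos : 0 < Real.sqrt |τ i| := Real.sqrt_pos.2 (abs_pos.2 h0)
          rw [abs_div]
          rw [abs_of_nonneg (by positivity : (0:ℝ) ≤ 2*Real.sqrt |τ i|)]
          rw [div_le_div_iff₀ (by positivity) (by norm_num)]
          have hms : |τ i| = Real.sqrt |τ i| * Real.sqrt |τ i| :=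
            (Real.mul_self_sqrt (abs_nonneg _)).symm
          nlinarith [abs_nonneg (τ i)]
      have hst : Real.sqrt |τ i| ≤ Real.sqrt K * Real.sqrt ‖t‖ := by
        rw [← Real.sqrt_mul (by linarith : (0:ℝ) ≤ K)]
        exact Real.sqrt_le_sqrt (hKrepr t i)
      linarith
    have hsum : (∑ i, 4*(‖a i‖+‖b i‖)) ≤ (N:ℝ) * (4*(Real.sqrt K * Real.sqrt ‖t‖)) := by
      calc (∑ i, 4*(‖a i‖+‖b i‖)) ≤ ∑ _i : Fin N, 4*(Real.sqrt K * Real.sqrt ‖t‖) :=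
            Finset.sum_le_sum fun i _ => habi i
        _ = (N:ℝ) * (4*(Real.sqrt K * Real.sqrt ‖t‖)) := by
            rw [Finset.sum_const, Finset.card_univ, Fintype.card_fin, nsmul_eq_mul]
    have hz0 : (0:ℝ) ≤ ‖z‖ := norm_nonneg _
    have ht0 : (0:ℝ) ≤ Real.sqrt ‖t‖ := Real.sqrt_nonneg _
    have hK0' : (0:ℝ) ≤ Real.sqrt K := Real.sqrt_nonneg _
    have hN0 : (0:ℝ) ≤ (N:ℝ) := Nat.cast_nonneg _
    nlinarith [mul_nonneg hN0 (mul_nonneg hK0' hz0),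
      mul_nonneg (by linarith : (0:ℝ) ≤ ((P:ℕ):ℝ)) ht0]
end

section
/- Let Q : ℝ^m × ℝ^m → ℝ^ℓ be bilinear and alternating, and assume span{Q(e_j, e_k) : 1 ≤ j < k ≤ m} = ℝ^ℓ. Then there exist p ∈ ℕ and C > 0 such that for every (z, t) ∈ ℝ^m × ℝ^ℓ, the system Σ_{j=1}^p u_j = z, Σ_{j=1}^p (p−2j+1) u_j = −p z, Σ_{1≤j<k≤p} Q(u_j, u_k) = t has a solution u₁, …, u_p ∈ ℝ^m with Σ_{j=1}^p |u_j| ≤ C(|z| + |t|^{1/2}). -/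
set_option linter.unusedSectionVars false

section Aux

open Finset

variable {E F : Type*} [NormedAddCommGroup E] [NormedSpace ℝ E]
  [NormedAddCommGroup F] [NormedSpace ℝ F]

/-- Weighted sum with arithmetic coefficients `c, c-2, c-4, …`. -/
def wsumAux (c : ℝ) : List E → E
  | [] => 0
  | a :: L => c • a + wsumAux (c - 2) L

/-- Sum of `Q` over ordered pairs of entries of a list. -/
def qsumAux (Q : E →ₗ[ℝ] E →ₗ[ℝ] F) : List E → F
  | [] => 0
  | a :: L => Q a L.sum + qsumAux Q L

@[simp] lemma wsumAux_nil (c : ℝ) : wsumAux c ([] : List E) = 0 := rfl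

@[simp] lemma wsumAux_cons (c : ℝ) (a : E) (L : List E) :
    wsumAux c (a :: L) = c • a + wsumAux (c - 2) L := rfl

@[simp] lemma qsumAux_nil (Q : E →ₗ[ℝ] E →ₗ[ℝ] F) : qsumAux Q ([] : List E) = 0 := rfl

@[simp] lemma qsumAux_cons (Q : E →ₗ[ℝ] E →ₗ[ℝ] F) (a : E) (L : List E) :
    qsumAux Q (a :: L) = Q a L.sum + qsumAux Q L := rfl

lemma wsumAux_append (c : ℝ) (L₁ L₂ : List E) :
    wsumAux c (L₁ ++ L₂) = wsumAux c L₁ + wsumAux (c - 2 * L₁.length) L₂ := by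
  induction L₁ generalizing c with
  | nil => simp
  | cons a L ih =>
      simp only [List.cons_append, wsumAux_cons, ih (c - 2), List.length_cons]
      have h2 : c - 2 - 2 * (L.length : ℝ) = c - 2 * ((L.length : ℕ) + 1 : ℕ) := by
        push_cast; ring
      rw [h2, add_assoc]

lemma qsumAux_append (Q : E →ₗ[ℝ] E →ₗ[ℝ] F) (L₁ L₂ : List E) :
    qsumAux Q (L₁ ++ L₂) = qsumAux Q L₁ + qsumAux Q L₂ + Q L₁.sum L₂.sum := by
  induction L₁ with
  | nil => simp
  | cons a L ih =>
      simp only [List.cons_append, qsumAux_cons, ih, List.sum_cons, List.sum_append,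
        map_add, LinearMap.add_apply]
      abel

lemma fin_sum_getD (L : List E) (n : ℕ) (h : L.length = n) :
    ∑ j : Fin n, L.getD j 0 = L.sum := by
  subst h
  induction L with
  | nil => simp
  | cons a L ih =>
      rw [show (a :: L).length = L.length + 1 from rfl, Fin.sum_univ_succ]
      simp only [Fin.val_zero, Fin.val_succ, List.getD_cons_zero, List.getD_cons_succ,
        List.sum_cons, ih]

lemma fin_sum_norm_getD (L : List E) (n : ℕ) (h : L.length = n) :
    ∑ j : Fin n, ‖L.getD j 0‖ = (L.map (fun x => ‖x‖)).sum := by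
  subst h
  induction L with
  | nil => simp
  | cons a L ih =>
      rw [show (a :: L).length = L.length + 1 from rfl, Fin.sum_univ_succ]
      simp only [Fin.val_zero, Fin.val_succ, List.getD_cons_zero, List.getD_cons_succ,
        List.map_cons, List.sum_cons, ih]

lemma fin_wsum_getD (L : List E) (n : ℕ) (h : L.length = n) (c : ℝ) :
    ∑ j : Fin n, (c - 2 * ((j : ℕ) : ℝ)) • L.getD j 0 = wsumAux c L := by
  subst h
  induction L generalizing c with
  | nil => simp
  | cons a L ih =>
      rw [show (a :: L).length = L.length + 1 from rfl, Fin.sum_univ_succ]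
      simp only [Fin.val_zero, Fin.val_succ, List.getD_cons_zero, List.getD_cons_succ,
        wsumAux_cons]
      congr 1
      · norm_num
      · rw [← ih (c - 2)]
        refine Finset.sum_congr rfl fun j _ => ?_
        congr 1
        push_cast; ring

lemma fin_qsum_getD (Q : E →ₗ[ℝ] E →ₗ[ℝ] F) (L : List E) (n : ℕ) (h : L.length = n) :
    ∑ j : Fin n, ∑ k ∈ Finset.Ioi j, Q (L.getD j 0) (L.getD k 0) = qsumAux Q L := by
  subst h
  induction L with
  | nil => simp
  | cons a L ih =>
      rw [show (a :: L).length = L.length + 1 from rfl, Fin.sum_univ_succ, Fin.sum_Ioi_zero]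
      simp only [Fin.val_zero, Fin.val_succ, List.getD_cons_zero, List.getD_cons_succ,
        qsumAux_cons]
      congr 1
      · rw [← fin_sum_getD L L.length rfl, map_sum]
      · rw [← ih]
        refine Finset.sum_congr rfl fun j _ => ?_
        rw [Fin.sum_Ioi_succ]
        refine Finset.sum_congr rfl fun k _ => ?_
        simp

lemma real_sign_mul_abs (s : ℝ) : Real.sign s * |s| = s := by
  rcases lt_trichotomy s 0 with h | h | h
  · rw [Real.sign_of_neg h, abs_of_neg h]; ring
  · simp [h, Real.sign_zero]
  · rw [Real.sign_of_pos h, abs_of_pos h]; ring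

lemma real_abs_sign_le (s : ℝ) : |Real.sign s| ≤ 1 := by
  rcases Real.sign_apply_eq s with h | h | h <;> rw [h] <;> norm_num

/-- The basic gadget: contributes `s • Q a b` to the `Q`-sum and nothing to the two
linear constraints. -/
noncomputable def glist (s : ℝ) (a b : E) : List E :=
  [(Real.sqrt |s| / 2) • a, (Real.sign s * Real.sqrt |s| / 2) • b,
   -((Real.sqrt |s| / 2) • a), -((Real.sign s * Real.sqrt |s| / 2) • b),
   -((Real.sqrt |s| / 2) • a), -((Real.sign s * Real.sqrt |s| / 2) • b),
   (Real.sqrt |s| / 2) • a, (Real.sign s * Real.sqrt |s| / 2) • b]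

lemma glist_length (s : ℝ) (a b : E) : (glist s a b).length = 8 := rfl

lemma glist_sum (s : ℝ) (a b : E) : (glist s a b).sum = 0 := by
  simp only [glist, List.sum_cons, List.sum_nil]
  abel

lemma glist_wsum (c s : ℝ) (a b : E) : wsumAux c (glist s a b) = 0 := by
  simp only [glist, wsumAux_cons, wsumAux_nil]
  module

lemma glist_qsum (Q : E →ₗ[ℝ] E →ₗ[ℝ] F) (hQ : ∀ z, Q z z = 0) (s : ℝ) (a b : E) :
    qsumAux Q (glist s a b) = s • Q a b := by
  have hba : Q b a = -Q a b := by
    have h := hQ (a + b)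
    simp only [map_add, LinearMap.add_apply, hQ a, hQ b, add_zero, zero_add] at h
    rwa [add_eq_zero_iff_eq_neg] at h
  have hαβ : (Real.sqrt |s| / 2) * (Real.sign s * Real.sqrt |s| / 2) = s / 4 := by
    have hs : Real.sqrt |s| * Real.sqrt |s| = |s| := Real.mul_self_sqrt (abs_nonneg s)
    calc (Real.sqrt |s| / 2) * (Real.sign s * Real.sqrt |s| / 2)
        = Real.sign s * (Real.sqrt |s| * Real.sqrt |s|) / 4 := by ring
      _ = Real.sign s * |s| / 4 := by rw [hs]
      _ = s / 4 := by rw [real_sign_mul_abs]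
  simp only [glist, qsumAux_cons, qsumAux_nil, List.sum_cons, List.sum_nil,
    map_add, map_neg, map_smul, LinearMap.add_apply, LinearMap.neg_apply,
    LinearMap.smul_apply, hQ, hba]
  have hs' : Real.sqrt |s| ^ 2 = |s| := Real.sq_sqrt (abs_nonneg s)
  have habs : Real.sign s * |s| = s := real_sign_mul_abs s
  match_scalars
  all_goals first
    | ring1
    | linear_combination Real.sign s * hs' + habs
    | linear_combination -(Real.sign s * hs') - habs
    | linear_combination 4 * hαβ
    | linear_combination (-4 : ℝ) * hαβ

lemma glist_norm_sum (s : ℝ) (a b : E) (ha : ‖a‖ ≤ 1) (hb : ‖b‖ ≤ 1) :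
    ((glist s a b).map (fun x => ‖x‖)).sum ≤ 4 * Real.sqrt |s| := by
  have h0 : (0:ℝ) ≤ Real.sqrt |s| := Real.sqrt_nonneg _
  have hα : ‖(Real.sqrt |s| / 2) • a‖ ≤ Real.sqrt |s| / 2 := by
    rw [norm_smul, Real.norm_eq_abs, abs_of_nonneg (by linarith)]
    nlinarith [norm_nonneg a]
  have hβ : ‖(Real.sign s * Real.sqrt |s| / 2) • b‖ ≤ Real.sqrt |s| / 2 := by
    rw [norm_smul, Real.norm_eq_abs]
    have h1 : |Real.sign s * Real.sqrt |s| / 2| ≤ Real.sqrt |s| / 2 := by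
      rw [abs_div, abs_mul, abs_of_nonneg h0]
      have := real_abs_sign_le s
      rw [abs_of_nonneg (by norm_num : (0:ℝ) ≤ 2)]
      nlinarith
    nlinarith [norm_nonneg b, abs_nonneg (Real.sign s * Real.sqrt |s| / 2)]
  simp only [glist, List.map_cons, List.map_nil, List.sum_cons, List.sum_nil, norm_neg]
  linarith

variable {ι : Type*}

/-- Concatenation of gadgets indexed by a list. -/
noncomputable def GLaux (sf : ι → ℝ) (af bf : ι → E) : List ι → List E
  | [] => []
  | x :: J => glist (sf x) (af x) (bf x) ++ GLaux sf af bf J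

lemma GLaux_length (sf : ι → ℝ) (af bf : ι → E) (J : List ι) :
    (GLaux sf af bf J).length = 8 * J.length := by
  induction J with
  | nil => rfl
  | cons x J ih => simp [GLaux, ih, glist_length]; ring

lemma GLaux_sum (sf : ι → ℝ) (af bf : ι → E) (J : List ι) :
    (GLaux sf af bf J).sum = 0 := by
  induction J with
  | nil => rfl
  | cons x J ih => simp [GLaux, glist_sum, ih]

lemma GLaux_wsum (c : ℝ) (sf : ι → ℝ) (af bf : ι → E) (J : List ι) :
    wsumAux c (GLaux sf af bf J) = 0 := by
  induction J generalizing c with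
  | nil => rfl
  | cons x J ih => rw [GLaux, wsumAux_append, glist_wsum, ih]; simp

lemma GLaux_qsum (Q : E →ₗ[ℝ] E →ₗ[ℝ] F) (hQ : ∀ z, Q z z = 0)
    (sf : ι → ℝ) (af bf : ι → E) (J : List ι) :
    qsumAux Q (GLaux sf af bf J) = (J.map (fun x => sf x • Q (af x) (bf x))).sum := by
  induction J with
  | nil => rfl
  | cons x J ih =>
      rw [GLaux, qsumAux_append, glist_qsum Q hQ, ih, glist_sum]
      simp

lemma GLaux_norm_sum (sf : ι → ℝ) (af bf : ι → E) (J : List ι)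
    (h : ∀ x, ‖af x‖ ≤ 1 ∧ ‖bf x‖ ≤ 1) :
    ((GLaux sf af bf J).map (fun x => ‖x‖)).sum
      ≤ (J.map (fun x => 4 * Real.sqrt |sf x|)).sum := by
  induction J with
  | nil => simp [GLaux]
  | cons x J ih =>
      rw [GLaux]
      simp only [List.map_append, List.sum_append, List.map_cons, List.sum_cons]
      have := glist_norm_sum (sf x) (af x) (bf x) (h x).1 (h x).2
      linarith

end Aux

set_option maxHeartbeats 2000000 in
/-- Let `Q : ℝ^m × ℝ^m → ℝ^ℓ` be bilinear, alternating, and satisfy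
the Hörmander condition `span{Q(e_j, e_k) : j < k} = ℝ^ℓ`.  Then there exist `p ∈ ℕ`
and `C > 0` such that for every `(z,t)`, the system `Σ_j u_j = z`,
`Σ_j (p−2j+1) u_j = −p z`, `Σ_{j<k} Q(u_j, u_k) = t` has a solution `u₁, …, u_p` with
`Σ_j |u_j| ≤ C(|z| + |t|^{1/2})` (Euclidean norms; the `1`-based coefficient `p−2j+1`
reads `p−2j−1` for `0`-based `j : Fin p`). -/
theorem step_two_system_solvable (m l : ℕ)
    (Q : EuclideanSpace ℝ (Fin m) →ₗ[ℝ] EuclideanSpace ℝ (Fin m) →ₗ[ℝ] EuclideanSpace ℝ (Fin l))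
    (hQ : ∀ z, Q z z = 0)
    (hspan : Submodule.span ℝ {x : EuclideanSpace ℝ (Fin l) |
        ∃ j k : Fin m, j < k ∧
          x = Q (EuclideanSpace.single j 1) (EuclideanSpace.single k 1)} = ⊤) :
    ∃ (p : ℕ) (C : ℝ), 0 < C ∧
      ∀ (z : EuclideanSpace ℝ (Fin m)) (t : EuclideanSpace ℝ (Fin l)),
        ∃ u : Fin p → EuclideanSpace ℝ (Fin m),
          (∑ j, u j) = z ∧
          (∑ j : Fin p, (((p : ℝ) - 2 * ((j : ℕ) : ℝ) - 1) • u j)) = -((p : ℝ) • z) ∧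
          (∑ j : Fin p, ∑ k ∈ Finset.Ioi j, Q (u j) (u k)) = t ∧
          ∑ j, ‖u j‖ ≤ C * (‖z‖ + Real.sqrt ‖t‖) := by
  classical
  obtain ⟨bs, hbS, hbspan, hbind⟩ := exists_linearIndependent ℝ
    {x : EuclideanSpace ℝ (Fin l) | ∃ j k : Fin m, j < k ∧
      x = Q (EuclideanSpace.single j 1) (EuclideanSpace.single k 1)}
  rw [hspan] at hbspan
  haveI : Fintype ↑bs := hbind.setFinite.fintype
  obtain ⟨B, hBapp⟩ : ∃ B : Module.Basis ↑bs ℝ (EuclideanSpace ℝ (Fin l)),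
      ∀ v : ↑bs, B v = (v : EuclideanSpace ℝ (Fin l)) :=
    ⟨Module.Basis.mk hbind (by rw [Subtype.range_coe, hbspan]), fun v => Module.Basis.mk_apply _ _ _⟩
  have hsum : ∀ t, ∑ v : ↑bs, B.repr t v • (v : EuclideanSpace ℝ (Fin l)) = t := by
    intro t
    calc ∑ v : ↑bs, B.repr t v • (v : EuclideanSpace ℝ (Fin l))
        = ∑ v : ↑bs, B.repr t v • B v :=
          Finset.sum_congr rfl fun v _ => by rw [hBapp]
      _ = t := B.sum_repr t
  -- coefficient bounds
  obtain ⟨K, hK0, hbd⟩ : ∃ K : ↑bs → ℝ, (∀ v, 0 ≤ K v) ∧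
      ∀ (t : EuclideanSpace ℝ (Fin l)) (v : ↑bs), |B.repr t v| ≤ K v * ‖t‖ := by
    refine ⟨fun v => ‖LinearMap.toContinuousLinearMap (B.coord v)‖,
      fun v => norm_nonneg _, fun t v => ?_⟩
    have h := (LinearMap.toContinuousLinearMap (B.coord v)).le_opNorm t
    simpa [Module.Basis.coord_apply] using h
  -- unit vectors realizing each basis element
  have hex : ∀ v : ↑bs, ∃ a b : EuclideanSpace ℝ (Fin m),
      ‖a‖ ≤ 1 ∧ ‖b‖ ≤ 1 ∧ Q a b = (v : EuclideanSpace ℝ (Fin l)) := by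
    intro v
    obtain ⟨j, k, -, hv⟩ := hbS v.2
    refine ⟨EuclideanSpace.single j 1, EuclideanSpace.single k 1, ?_, ?_, hv.symm⟩
    · rw [EuclideanSpace.norm_single]; norm_num
    · rw [EuclideanSpace.norm_single]; norm_num
  choose af bf haf hbf hQab using hex
  obtain ⟨J, hJ⟩ : ∃ J' : List ↑bs, J' = (Finset.univ : Finset ↑bs).toList := ⟨_, rfl⟩
  obtain ⟨p, hp⟩ : ∃ p' : ℕ, p' = 8 * J.length + 2 := ⟨_, rfl⟩
  obtain ⟨Cg, hCg⟩ : ∃ c : ℝ, c = ∑ v : ↑bs, 4 * Real.sqrt (K v) := ⟨_, rfl⟩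
  have hCg0 : 0 ≤ Cg := by
    rw [hCg]
    exact Finset.sum_nonneg fun v _ => by positivity
  refine ⟨p, 4 + Cg, by linarith, fun z t => ?_⟩
  have hPval : (p : ℝ) = 8 * (J.length : ℝ) + 2 := by rw [hp]; push_cast; ring
  have hN0 : (0:ℝ) ≤ (J.length : ℝ) := Nat.cast_nonneg _
  have hP2 : (2:ℝ) ≤ (p:ℝ) := by rw [hPval]; linarith
  have hPne : (p:ℝ) - 1 ≠ 0 := by intro h; linarith
  obtain ⟨γ, hγ⟩ : ∃ c : ℝ, c = 1 / 2 - (p:ℝ) / (2 * ((p:ℝ) - 1)) := ⟨_, rfl⟩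
  obtain ⟨δ, hδ⟩ : ∃ c : ℝ, c = 1 / 2 + (p:ℝ) / (2 * ((p:ℝ) - 1)) := ⟨_, rfl⟩
  obtain ⟨G, hG⟩ : ∃ G' : List (EuclideanSpace ℝ (Fin m)),
    G' = GLaux (fun v => B.repr t v) af bf J := ⟨_, rfl⟩
  obtain ⟨L, hL⟩ : ∃ L' : List (EuclideanSpace ℝ (Fin m)),
    L' = (γ • z) :: (G ++ [δ • z]) := ⟨_, rfl⟩
  have hlen : L.length = p := by
    rw [hL, hG, hp]
    simp [GLaux_length]
  refine ⟨fun j => L.getD j 0, ?_, ?_, ?_, ?_⟩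
  · -- sum = z
    rw [fin_sum_getD L p hlen, hL, List.sum_cons, List.sum_append, hG, GLaux_sum]
    simp only [List.sum_cons, List.sum_nil, add_zero, zero_add]
    rw [← add_smul]
    have h1 : γ + δ = 1 := by rw [hγ, hδ]; ring
    rw [h1, one_smul]
  · -- weighted sum
    have e1 : (∑ j : Fin p, (((p : ℝ) - 2 * ((j : ℕ) : ℝ) - 1) • L.getD j 0))
        = wsumAux ((p:ℝ) - 1) L := by
      rw [← fin_wsum_getD L p hlen ((p:ℝ) - 1)]
      refine Finset.sum_congr rfl fun j _ => ?_
      congr 1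
      ring
    rw [e1, hL, wsumAux_cons, wsumAux_append, hG, GLaux_wsum, GLaux_length, wsumAux_cons,
      wsumAux_nil]
    have hc : (p:ℝ) - 1 - 2 - 2 * ((8 * J.length : ℕ) : ℝ) = -((p:ℝ) - 1) := by
      push_cast
      linarith [hPval]
    rw [hc]
    have hcc : 2 * ((p:ℝ) - 1) * ((p:ℝ) / (2 * ((p:ℝ) - 1))) = (p:ℝ) := by
      field_simp [hPne]
    have hkey : ((p:ℝ) - 1) * γ + (-((p:ℝ) - 1)) * δ = -(p:ℝ) := by
      rw [hγ, hδ]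
      linear_combination -hcc
    match_scalars
    · linear_combination hkey
  · -- quadratic sum
    rw [fin_qsum_getD Q L p hlen, hL, qsumAux_cons, qsumAux_append, hG, GLaux_qsum Q hQ,
      GLaux_sum, List.sum_append, GLaux_sum]
    simp only [List.sum_cons, List.sum_nil, add_zero, zero_add, qsumAux_cons, qsumAux_nil,
      map_zero, LinearMap.zero_apply]
    have h1 : Q (γ • z) (δ • z) = 0 := by
      simp [hQ z]
    have h2 : (J.map (fun x => B.repr t x • Q (af x) (bf x))).sum = t := by
      have h3 : (fun x : ↑bs => B.repr t x • Q (af x) (bf x))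
          = fun x : ↑bs => B.repr t x • (x : EuclideanSpace ℝ (Fin l)) :=
        funext fun x => by rw [hQab]
      rw [h3, hJ, Finset.sum_map_toList]
      exact hsum t
    rw [h1, h2]
    simp
  · -- norm bound
    rw [fin_sum_norm_getD L p hlen, hL]
    simp only [List.map_cons, List.map_append, List.sum_cons, List.sum_append,
      List.map_nil, List.sum_nil, add_zero]
    have hb2 : (0:ℝ) < 2 * ((p:ℝ) - 1) := by linarith
    have hq1 : (p:ℝ) / (2 * ((p:ℝ) - 1)) ≤ 1 := by
      rw [div_le_one hb2]
      linarith
    have hq0 : 0 < (p:ℝ) / (2 * ((p:ℝ) - 1)) := by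
      apply div_pos <;> linarith
    have h1 : |γ| ≤ 1 := by
      rw [abs_le, hγ]; constructor <;> linarith
    have h2 : |δ| ≤ 2 := by
      rw [abs_le, hδ]; constructor <;> linarith
    have hz : ‖γ • z‖ + ‖δ • z‖ ≤ 4 * ‖z‖ := by
      rw [norm_smul, norm_smul, Real.norm_eq_abs, Real.norm_eq_abs]
      have e1' := mul_le_mul_of_nonneg_right h1 (norm_nonneg z)
      have e2' := mul_le_mul_of_nonneg_right h2 (norm_nonneg z)
      linarith [norm_nonneg z]
    have hg : ((G.map (fun x => ‖x‖)).sum : ℝ) ≤ Cg * Real.sqrt ‖t‖ := by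
      have ha : ((G.map (fun x => ‖x‖)).sum : ℝ)
          ≤ (J.map (fun x => 4 * Real.sqrt |B.repr t x|)).sum := by
        rw [hG]
        exact GLaux_norm_sum _ af bf J (fun x => ⟨haf x, hbf x⟩)
      have hb : (J.map (fun x => 4 * Real.sqrt |B.repr t x|)).sum
          = ∑ v : ↑bs, 4 * Real.sqrt |B.repr t v| := by
        rw [hJ, Finset.sum_map_toList]
      have hc : ∀ v : ↑bs, 4 * Real.sqrt |B.repr t v|
          ≤ 4 * Real.sqrt (K v) * Real.sqrt ‖t‖ := by
        intro v
        calc 4 * Real.sqrt |B.repr t v| ≤ 4 * Real.sqrt (K v * ‖t‖) := by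
              have := Real.sqrt_le_sqrt (hbd t v)
              linarith
          _ = 4 * Real.sqrt (K v) * Real.sqrt ‖t‖ := by
              rw [Real.sqrt_mul (hK0 v)]; ring
      calc ((G.map (fun x => ‖x‖)).sum : ℝ)
          ≤ ∑ v : ↑bs, 4 * Real.sqrt |B.repr t v| := by rw [← hb]; exact ha
        _ ≤ ∑ v : ↑bs, 4 * Real.sqrt (K v) * Real.sqrt ‖t‖ :=
            Finset.sum_le_sum fun v _ => hc v
        _ = Cg * Real.sqrt ‖t‖ := by rw [hCg, Finset.sum_mul]
    have hz0 : (0:ℝ) ≤ ‖z‖ := norm_nonneg z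
    have ht0 : (0:ℝ) ≤ Real.sqrt ‖t‖ := Real.sqrt_nonneg _
    nlinarith [mul_nonneg hCg0 hz0, mul_nonneg hCg0 ht0]
end

section
/- Let Q : ℝ^m × ℝ^m → ℝ^ℓ be bilinear and alternating, and assume span{Q(e_j, e_k) : 1 ≤ j < k ≤ m} = ℝ^ℓ. Then there exist h ∈ ℕ and C > 0 such that for every t ∈ ℝ^ℓ there exist vectors v₁, w₁, v₂, w₂, …, v_h, w_h ∈ ℝ^m with Σ_{i=1}^h Q(v_i, w_i) = t and max_i(|v_i|, |w_i|) ≤ C|t|^{1/2}. -/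
/-- Let `Q : ℝ^m × ℝ^m → ℝ^ℓ` be bilinear, alternating, and satisfy
the Hörmander condition `span{Q(e_j, e_k) : j < k} = ℝ^ℓ`.  Then there exist `h ∈ ℕ`
and `C > 0` such that every `t ∈ ℝ^ℓ` can be written as `t = Σ_{i=1}^h Q(v_i, w_i)`
with `max(|v_i|, |w_i|) ≤ C |t|^{1/2}` for every `i` (Euclidean norms). -/
theorem step_two_quadratic_surjectivity_with_bounds (m l : ℕ)
    (Q : EuclideanSpace ℝ (Fin m) →ₗ[ℝ] EuclideanSpace ℝ (Fin m) →ₗ[ℝ] EuclideanSpace ℝ (Fin l))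
    (hQ : ∀ z, Q z z = 0)
    (hspan : Submodule.span ℝ {x : EuclideanSpace ℝ (Fin l) |
        ∃ j k : Fin m, j < k ∧
          x = Q (EuclideanSpace.single j 1) (EuclideanSpace.single k 1)} = ⊤) :
    ∃ (h : ℕ) (C : ℝ), 0 < C ∧
      ∀ t : EuclideanSpace ℝ (Fin l),
        ∃ v w : Fin h → EuclideanSpace ℝ (Fin m),
          (∑ i, Q (v i) (w i)) = t ∧
          ∀ i, ‖v i‖ ≤ C * Real.sqrt ‖t‖ ∧ ‖w i‖ ≤ C * Real.sqrt ‖t‖ := by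
  classical
  set E : Fin m → EuclideanSpace ℝ (Fin m) := fun j => EuclideanSpace.single j (1:ℝ) with hE
  let L : ((Fin m × Fin m) → ℝ) →ₗ[ℝ] EuclideanSpace ℝ (Fin l) :=
    { toFun := fun c => ∑ p : Fin m × Fin m, c p • Q (E p.1) (E p.2)
      map_add' := by intro x y; simp [add_smul, Finset.sum_add_distrib]
      map_smul' := by intro a x; simp [smul_smul, Finset.smul_sum]
    }
  have hLsurj : LinearMap.range L = ⊤ := by
    rw [← top_le_iff, ← hspan, Submodule.span_le]
    rintro x ⟨j, k, hjk, rfl⟩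
    refine ⟨Pi.single (j, k) 1, ?_⟩
    have hL : L (Pi.single (j, k) 1)
        = ∑ p : Fin m × Fin m, (Pi.single (j, k) (1:ℝ) : Fin m × Fin m → ℝ) p • Q (E p.1) (E p.2) := rfl
    rw [hL, Finset.sum_eq_single (j, k)]
    · simp [hE]
    · intro b _ hb; simp [Pi.single_apply, hb]
    · simp
  obtain ⟨g, hg⟩ := L.exists_rightInverse_of_surjective hLsurj
  let g' := LinearMap.toContinuousLinearMap g
  set K : ℝ := ‖g'‖ + 1 with hKdef
  have hK : 0 < K := by positivity
  refine ⟨m * m, Real.sqrt K + 1, by positivity, fun t => ?_⟩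
  set c : (Fin m × Fin m) → ℝ := g t with hc
  have hct : L c = t := by
    have := congrArg (fun f => f t) hg
    simpa using this
  have hcb : ∀ p, |c p| ≤ K * ‖t‖ := by
    intro p
    have h1 : ‖c p‖ ≤ ‖c‖ := norm_le_pi_norm c p
    have h2 : ‖c‖ ≤ ‖g'‖ * ‖t‖ := by
      have := g'.le_opNorm t
      exact this
    have h3 : ‖g'‖ * ‖t‖ ≤ K * ‖t‖ := by
      apply mul_le_mul_of_nonneg_right _ (norm_nonneg t)
      simp [hKdef]
    calc |c p| = ‖c p‖ := rfl
      _ ≤ ‖c‖ := h1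
      _ ≤ ‖g'‖ * ‖t‖ := h2
      _ ≤ K * ‖t‖ := h3
  let ε : Fin (m * m) ≃ Fin m × Fin m := finProdFinEquiv.symm
  let v : Fin (m * m) → EuclideanSpace ℝ (Fin m) :=
    fun i => Real.sqrt |c (ε i)| • E (ε i).1
  let w : Fin (m * m) → EuclideanSpace ℝ (Fin m) :=
    fun i => ((if 0 ≤ c (ε i) then 1 else -1) * Real.sqrt |c (ε i)|) • E (ε i).2
  have key : ∀ p : Fin m × Fin m,
      Q (Real.sqrt |c p| • E p.1) (((if 0 ≤ c p then 1 else -1) * Real.sqrt |c p|) • E p.2)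
        = c p • Q (E p.1) (E p.2) := by
    intro p
    simp only [map_smul, LinearMap.smul_apply, smul_smul]
    congr 1
    have hs : Real.sqrt |c p| * Real.sqrt |c p| = |c p| :=
      Real.mul_self_sqrt (abs_nonneg _)
    rcases le_or_gt 0 (c p) with h | h
    · rw [if_pos h, one_mul, hs, abs_of_nonneg h]
    · rw [if_neg (not_le.mpr h), neg_one_mul, neg_mul, hs, abs_of_neg h, neg_neg]
  have hnormE : ∀ j : Fin m, ‖E j‖ = 1 := by
    intro j; simp [hE]
  have hbound : ∀ p : Fin m × Fin m, Real.sqrt |c p| ≤ (Real.sqrt K + 1) * Real.sqrt ‖t‖ := by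
    intro p
    have h1 : Real.sqrt |c p| ≤ Real.sqrt (K * ‖t‖) := Real.sqrt_le_sqrt (hcb p)
    rw [Real.sqrt_mul hK.le] at h1
    have h2 : Real.sqrt K * Real.sqrt ‖t‖ ≤ (Real.sqrt K + 1) * Real.sqrt ‖t‖ := by
      apply mul_le_mul_of_nonneg_right _ (Real.sqrt_nonneg _)
      linarith
    linarith
  refine ⟨v, w, ?_, ?_⟩
  · calc (∑ i, Q (v i) (w i))
        = ∑ i, c (ε i) • Q (E (ε i).1) (E (ε i).2) := by
          apply Finset.sum_congr rfl
          intro i _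
          exact key (ε i)
      _ = ∑ p : Fin m × Fin m, c p • Q (E p.1) (E p.2) :=
          Fintype.sum_equiv ε _ _ (fun i => rfl)
      _ = t := hct
  · intro i
    constructor
    · have : ‖v i‖ = Real.sqrt |c (ε i)| := by
        simp [v, norm_smul, hnormE, Real.sqrt_nonneg, abs_of_nonneg]
      rw [this]; exact hbound (ε i)
    · have : ‖w i‖ = Real.sqrt |c (ε i)| := by
        simp only [w, norm_smul, hnormE, mul_one, Real.norm_eq_abs, abs_mul]
        split_ifs <;> simp [abs_of_nonneg (Real.sqrt_nonneg _)]
      rw [this]; exact hbound (ε i)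
end

section
/- Let ξ = (ξ₁, ξ₂) ∈ ℝ² with ξ₁² + ξ₂² = 1, and let ψ : ℝ → ℝ be differentiable with ψ′(s) ≤ 0 for all s. Define F : ℝ⁵ → ℝ by F(x) = ξ₂x₄ − ξ₁x₅ − (ξ₁x₁ + ξ₂x₂)³/6 − ψ(ξ₁x₁ + ξ₂x₂). Then for every x ∈ ℝ⁵, F is differentiable at x and its Fréchet derivative satisfies: (i) dF(x)(−ξ₂X₁(x) + ξ₁X₂(x)) = 0; and (ii) dF(x)(ξ₁X₁(x) + ξ₂X₂(x)) = (1/2)(x₁² + x₂² − (ξ₁x₁ + ξ₂x₂)²) − ψ′(ξ₁x₁ + ξ₂x₂) ≥ 0. -/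
/-- On `ℝ⁵` (coordinates indexed `0,…,4`), consider the horizontal
vector fields of the free Carnot group of step 3 and rank 2,
`X₁(x) = (1, 0, −x₂/2, 0, −(x₁²+x₂²)/2)` and `X₂(x) = (0, 1, x₁/2, (x₁²+x₂²)/2, 0)`.
Let `ξ = (ξ₁,ξ₂)` be a unit vector, `ψ` differentiable with `ψ′ ≤ 0`, and
`F(x) = ξ₂x₄ − ξ₁x₅ − ⟨ξ,x⟩³/6 − ψ(⟨ξ,x⟩)`.  Then `F` is differentiable at every `x`,
`dF(x)(−ξ₂X₁(x) + ξ₁X₂(x)) = 0`, and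
`dF(x)(ξ₁X₁(x) + ξ₂X₂(x)) = (1/2)(x₁² + x₂² − ⟨ξ,x⟩²) − ψ′(⟨ξ,x⟩) ≥ 0`. -/
theorem free_step_three_constant_horizontal_normal (ξ₁ ξ₂ : ℝ)
    (hξ : ξ₁ ^ 2 + ξ₂ ^ 2 = 1)
    (ψ ψ' : ℝ → ℝ) (hψ : ∀ s, HasDerivAt ψ (ψ' s) s) (hψ' : ∀ s, ψ' s ≤ 0)
    (F : (Fin 5 → ℝ) → ℝ)
    (hF : ∀ x, F x = ξ₂ * x 3 - ξ₁ * x 4 - (ξ₁ * x 0 + ξ₂ * x 1) ^ 3 / 6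
          - ψ (ξ₁ * x 0 + ξ₂ * x 1))
    (X1 X2 : (Fin 5 → ℝ) → (Fin 5 → ℝ))
    (hX1 : ∀ x, X1 x = ![1, 0, -(x 1) / 2, 0, -((x 0) ^ 2 + (x 1) ^ 2) / 2])
    (hX2 : ∀ x, X2 x = ![0, 1, (x 0) / 2, ((x 0) ^ 2 + (x 1) ^ 2) / 2, 0])
    (x : Fin 5 → ℝ) :
    DifferentiableAt ℝ F x ∧
    fderiv ℝ F x (-ξ₂ • X1 x + ξ₁ • X2 x) = 0 ∧
    fderiv ℝ F x (ξ₁ • X1 x + ξ₂ • X2 x)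
      = (1 / 2) * ((x 0) ^ 2 + (x 1) ^ 2 - (ξ₁ * x 0 + ξ₂ * x 1) ^ 2)
        - ψ' (ξ₁ * x 0 + ξ₂ * x 1) ∧
    0 ≤ (1 / 2) * ((x 0) ^ 2 + (x 1) ^ 2 - (ξ₁ * x 0 + ξ₂ * x 1) ^ 2)
        - ψ' (ξ₁ * x 0 + ξ₂ * x 1) := by

  classical
  set s : ℝ := ξ₁ * x 0 + ξ₂ * x 1 with hs
  have hFe : F = fun y : Fin 5 → ℝ => ξ₂ * y 3 - ξ₁ * y 4
      - (ξ₁ * y 0 + ξ₂ * y 1) ^ 3 / 6 - ψ (ξ₁ * y 0 + ξ₂ * y 1) := funext hF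
  let P : Fin 5 → (Fin 5 → ℝ) →L[ℝ] ℝ := fun i =>
    ContinuousLinearMap.proj (R := ℝ) (φ := fun _ : Fin 5 => ℝ) i
  let L : (Fin 5 → ℝ) →L[ℝ] ℝ := ξ₁ • P 0 + ξ₂ • P 1
  have hL : HasFDerivAt (fun y : Fin 5 → ℝ => ξ₁ * y 0 + ξ₂ * y 1) L x := by
    have := L.hasFDerivAt (x := x)
    convert this using 2
    simp [L, P]
  have hcube : HasFDerivAt (fun y : Fin 5 → ℝ => (ξ₁ * y 0 + ξ₂ * y 1) ^ 3 / 6)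
      ((3 * s ^ 2 / 6) • L) x := by
    have hd : HasDerivAt (fun t : ℝ => t ^ 3 / 6) (3 * s ^ 2 / 6) s := by
      simpa using (hasDerivAt_pow 3 s).div_const 6
    exact hd.comp_hasFDerivAt x hL
  have hpsi : HasFDerivAt (fun y : Fin 5 → ℝ => ψ (ξ₁ * y 0 + ξ₂ * y 1))
      (ψ' s • L) x := (hψ s).comp_hasFDerivAt x hL
  have h3 : HasFDerivAt (fun y : Fin 5 → ℝ => ξ₂ * y 3) (ξ₂ • P 3) x := by
    have := (P 3).hasFDerivAt (x := x)
    exact this.const_mul ξ₂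
  have h4 : HasFDerivAt (fun y : Fin 5 → ℝ => ξ₁ * y 4) (ξ₁ • P 4) x := by
    have := (P 4).hasFDerivAt (x := x)
    exact this.const_mul ξ₁
  set D : (Fin 5 → ℝ) →L[ℝ] ℝ :=
    ξ₂ • P 3 - ξ₁ • P 4 - (3 * s ^ 2 / 6) • L - ψ' s • L with hD
  have hFd : HasFDerivAt F D x := by
    rw [hFe]
    exact ((h3.sub h4).sub hcube).sub hpsi
  have hdiff : DifferentiableAt ℝ F x := hFd.differentiableAt
  have hfd : fderiv ℝ F x = D := hFd.fderiv
  have hDapp : ∀ v : Fin 5 → ℝ, D v = ξ₂ * v 3 - ξ₁ * v 4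
      - (3 * s ^ 2 / 6) * (ξ₁ * v 0 + ξ₂ * v 1) - ψ' s * (ξ₁ * v 0 + ξ₂ * v 1) := by
    intro v
    simp [hD, L, P, mul_comm]
    ring
  refine ⟨hdiff, ?_, ?_, ?_⟩
  · rw [hfd, hDapp]
    simp [hX1, hX2, Fin.isValue, Matrix.cons_val_zero, Matrix.cons_val_one,
      Matrix.head_cons, hs]
    ring
  · rw [hfd, hDapp]
    simp [hX1, hX2, hs]
    linear_combination ((x 0 ^ 2 + x 1 ^ 2) / 2 - (ξ₁ * x 0 + ξ₂ * x 1) ^ 2 / 2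
      - ψ' (ξ₁ * x 0 + ξ₂ * x 1)) * hξ
  · have h1 : s ^ 2 ≤ x 0 ^ 2 + x 1 ^ 2 := by
      rw [hs]
      nlinarith [sq_nonneg (ξ₁ * x 1 - ξ₂ * x 0), sq_nonneg (x 0), sq_nonneg (x 1), hξ]
    have h2 := hψ' s
    simp only [hs] at h1 h2 ⊢
    linarith
end
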